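/- arXiv:2412.01627 — 4 statements merged into one kernel-verified Lean document; each statement's English description precedes it below -/
import Mathlib

section
/- Let Δ be a co-saturated subset of Par(n) (with respect to the dominance order). Suppose M'(Δ) = ℤ·G'(Par(n)∖Δ) + α·I(Δ) is a proper submodule of ℤS(n), and let s be the lexicographically largest element of S(n) not in M'(Δ). Then A(s) ∩ Δ = ∅. -/
open MonoidAlgebra Equiv

/-! ### Robinson–Schensted insertion and shape -/

/-- Schensted row insertion: insert `x` into row `r`, returning new row and bumped entry. -/
def rowInsert (x : ℕ) (r : List ℕ) : List ℕ × Option ℕ :=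
  match r.findIdx? (fun y => decide (x < y)) with
  | none => (r ++ [x], none)
  | some i => (r.set i x, r[i]?)

/-- Insert an entry into a tableau (given as its list of rows). -/
def insertTab : List (List ℕ) → ℕ → List (List ℕ)
  | [], x => [[x]]
  | r :: rs, x =>
    match rowInsert x r with
    | (r', none) => r' :: rs
    | (r', some y) => r' :: insertTab rs y

/-- The Robinson–Schensted insertion tableau of a word. -/
def RSTab (w : List ℕ) : List (List ℕ) := w.foldl insertTab []

/-- The Robinson–Schensted shape of a word, as a multiset of row lengths. -/
def RSshape (w : List ℕ) : Multiset ℕ := ((RSTab w).map List.length : List ℕ)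

/-- The one-line word of a permutation of `Fin n`. -/
def wordOf {n : ℕ} (σ : Equiv.Perm (Fin n)) : List ℕ :=
  (List.finRange n).map fun i => (σ i : ℕ)

/-! ### Partitions, dominance order, conjugation -/

/-- The parts of a multiset, sorted in weakly decreasing order. -/
def descSort (m : Multiset ℕ) : List ℕ := (m.sort (· ≤ ·)).reverse

/-- Dominance order on partitions (as multisets of parts): every partial sum
of the decreasingly sorted parts of `a` is at most that of `b`. -/
def domLE (a b : Multiset ℕ) : Prop :=
  ∀ k : ℕ, ((descSort a).take k).sum ≤ ((descSort b).take k).sum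

/-- A set of partitions of `n` is co-saturated if it is upward closed in dominance order. -/
def CoSaturated {n : ℕ} (Δ : Finset (Nat.Partition n)) : Prop :=
  ∀ μ ∈ Δ, ∀ lam : Nat.Partition n, domLE μ.parts lam.parts → lam ∈ Δ

/-- `Γ` has a unique minimal element in the dominance order. -/
def UniqueMinimal {n : ℕ} (Γ : Finset (Nat.Partition n)) : Prop :=
  ∃! lam, lam ∈ Γ ∧ ∀ μ ∈ Γ, domLE μ.parts lam.parts → μ = lam

/-- `Γ` has a unique maximal element in the dominance order. -/
def UniqueMaximal {n : ℕ} (Γ : Finset (Nat.Partition n)) : Prop :=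
  ∃! lam, lam ∈ Γ ∧ ∀ μ ∈ Γ, domLE lam.parts μ.parts → μ = lam

/-- The conjugate (transpose) of a partition given as a multiset of parts. -/
def conjM (m : Multiset ℕ) : Multiset ℕ :=
  (((List.range m.sum).map (fun k => Multiset.card (m.filter (fun x => k < x)))).filter
    (fun c => decide (0 < c)) : List ℕ)

/-- The set of conjugates of members of `Γ`. -/
noncomputable def conjFinset {n : ℕ} (Γ : Finset (Nat.Partition n)) : Finset (Nat.Partition n) :=
  open Classical in Finset.univ.filter (fun lam => ∃ μ ∈ Γ, conjM μ.parts = lam.parts)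

/-- The decreasingly sorted list of parts of a partition. -/
def descParts {n : ℕ} (lam : Nat.Partition n) : List ℕ := descSort lam.parts

/-! ### Young subgroups and (signed) Young symmetrizers -/

/-- The index of the block (interval of the composition `l`) containing position `i`. -/
def blk (l : List ℕ) (i : ℕ) : ℕ :=
  ((List.range l.length).filter (fun k => decide ((l.take (k+1)).sum ≤ i))).length

/-- `σ` lies in the standard Young subgroup `Sym(lam)`: it preserves each block. -/
def IsYoung {n : ℕ} (lam : Nat.Partition n) (σ : Equiv.Perm (Fin n)) : Prop :=
  ∀ i : Fin n, blk (descParts lam) (σ i) = blk (descParts lam) (i : ℕ)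

instance {n : ℕ} (lam : Nat.Partition n) : DecidablePred (IsYoung lam) := fun σ =>
  decidable_of_iff (∀ i : Fin n, blk (descParts lam) (σ i) = blk (descParts lam) (i : ℕ)) Iff.rfl

/-- `[Sym(lam)]`, the sum in the group algebra of the elements of the Young subgroup. -/
noncomputable def youngSym (R : Type) [CommRing R] {n : ℕ} (lam : Nat.Partition n) :
    MonoidAlgebra R (Equiv.Perm (Fin n)) :=
  ∑ σ ∈ Finset.univ.filter (IsYoung lam), MonoidAlgebra.single σ (1 : R)

/-- The signed Young symmetrizer `Σ_{σ ∈ Sym(lam)} sgn(σ) σ`. -/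
noncomputable def youngSymSgn (R : Type) [CommRing R] {n : ℕ} (lam : Nat.Partition n) :
    MonoidAlgebra R (Equiv.Perm (Fin n)) :=
  ∑ σ ∈ Finset.univ.filter (IsYoung lam), MonoidAlgebra.single σ ((Equiv.Perm.sign σ : ℤ) : R)

/-- The two-sided ideal `I_R(Δ)` generated by the `[Sym(lam)]`, `lam ∈ Δ`,
as an `R`-submodule of the group algebra. -/
noncomputable def symIdeal (R : Type) [CommRing R] {n : ℕ} (Δ : Finset (Nat.Partition n)) :
    Submodule R (MonoidAlgebra R (Equiv.Perm (Fin n))) :=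
  Submodule.span R {x | ∃ lam ∈ Δ, ∃ a b, x = a * youngSym R lam * b}

/-- The two-sided ideal `I_R(Δ)†` generated by the signed Young symmetrizers, `lam ∈ Δ`. -/
noncomputable def sgnIdeal (R : Type) [CommRing R] {n : ℕ} (Δ : Finset (Nat.Partition n)) :
    Submodule R (MonoidAlgebra R (Equiv.Perm (Fin n))) :=
  Submodule.span R {x | ∃ lam ∈ Δ, ∃ a b, x = a * youngSymSgn R lam * b}

/-! ### permutations with prescribed RS shape -/

/-- `G(Γ)`: permutations whose Robinson–Schensted shape lies in `Γ`. -/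
def RSset {n : ℕ} (Γ : Finset (Nat.Partition n)) : Set (Equiv.Perm (Fin n)) :=
  {σ | ∃ lam ∈ Γ, RSshape (wordOf σ) = lam.parts}

/-- The `R`-span of `G(Γ)` inside the group algebra. -/
noncomputable def Gspan (R : Type) [CommRing R] {n : ℕ} (Γ : Finset (Nat.Partition n)) :
    Submodule R (MonoidAlgebra R (Equiv.Perm (Fin n))) :=
  Submodule.span R ((fun σ => MonoidAlgebra.single σ (1 : R)) '' RSset Γ)

/-! ### Greene's sets `A(s)` -/

/-- `s` is (strictly) increasing on the subset `X`. -/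
def IncreasingOn {n : ℕ} (s : Fin n → Fin n) (X : Finset (Fin n)) : Prop :=
  ∀ i ∈ X, ∀ j ∈ X, i < j → s i < s j

/-- `μ ∈ A(s)`: the partition `μ` is upwardly compatible with `s`, i.e. `{1,…,n}` is a
disjoint union of nonempty subsets of sizes the parts of `μ` on each of which `s` increases. -/
def UpComp {n : ℕ} (s : Equiv.Perm (Fin n)) (μ : Nat.Partition n) : Prop :=
  ∃ (m : ℕ) (X : Fin m → Finset (Fin n)),
    (∀ k, (X k).Nonempty) ∧
    (∀ i : Fin n, ∃! k, i ∈ X k) ∧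
    μ.parts = Multiset.map (fun k => (X k).card) Finset.univ.val ∧
    ∀ k, IncreasingOn (⇑s) (X k)

/-! ### standard Young tableaux -/

/-- The cells of the Young diagram of a decreasing list of parts. -/
def cellsF (l : List ℕ) : Finset (ℕ × ℕ) :=
  (Finset.range l.length ×ˢ Finset.range (l.sum + 1)).filter (fun p => p.2 < l.getD p.1 0)

/-- `f_lam`, the number of standard Young tableaux of shape `lam`. -/
noncomputable def numSYT {n : ℕ} (lam : Nat.Partition n) : ℕ :=
  Nat.card {T : cellsF (descParts lam) → Fin n //
    Function.Bijective T ∧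
    ∀ p q : cellsF (descParts lam),
      (p : ℕ × ℕ).1 ≤ (q : ℕ × ℕ).1 → (p : ℕ × ℕ).2 ≤ (q : ℕ × ℕ).2 → p ≠ q → T p < T q}


section AuxLemmas

lemma filter_range_lt_length (N j : ℕ) (h : j ≤ N) :
    ((List.range N).filter (fun k => decide (k < j))).length = j := by
  induction N with
  | zero =>
    simp only [List.range_zero, List.filter_nil, List.length_nil]
    omega
  | succ N ih =>
    rw [List.range_succ, List.filter_append]
    by_cases hj : j ≤ N
    · have h2 : (List.filter (fun k => decide (k < j)) [N]) = [] := by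
        simp; omega
      rw [h2]
      simp [ih hj]
    · have hj' : j = N + 1 := by omega
      subst hj'
      have h1 : (List.range N).filter (fun k => decide (k < N + 1)) = List.range N := by
        apply List.filter_eq_self.mpr
        intro a ha
        simp only [List.mem_range] at ha
        simp; omega
      rw [h1]; simp

lemma take_sum_mono (l : List ℕ) {a b : ℕ} (h : a ≤ b) : (l.take a).sum ≤ (l.take b).sum := by
  have h1 : (l.take b).take a = l.take a := by rw [List.take_take, min_eq_left h]
  rw [← h1]
  exact List.Sublist.sum_le_sum (List.take_sublist a (l.take b)) (fun x _ => Nat.zero_le x)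

lemma blk_eq_of {l : List ℕ} {j i : ℕ} (hj : j < l.length)
    (h1 : (l.take j).sum ≤ i) (h2 : i < (l.take (j + 1)).sum) : blk l i = j := by
  unfold blk
  have hcongr : ∀ k ∈ List.range l.length,
      (decide ((l.take (k + 1)).sum ≤ i)) = (decide (k < j)) := by
    intro k _
    simp only [decide_eq_decide]
    constructor
    · intro hle
      by_contra hkj
      push_neg at hkj
      have := take_sum_mono l (show j + 1 ≤ k + 1 by omega)
      omega
    · intro hkj
      have := take_sum_mono l (show k + 1 ≤ j from hkj)
      omega
  rw [List.filter_congr hcongr, filter_range_lt_length _ _ (le_of_lt hj)]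

lemma blk_spec : ∀ (l : List ℕ) (i : ℕ), i < l.sum →
    ∃ j, j < l.length ∧ (l.take j).sum ≤ i ∧ i < (l.take (j + 1)).sum := by
  intro l
  induction l with
  | nil => intro i hi; simp at hi
  | cons a t ih =>
    intro i hi
    by_cases hia : i < a
    · exact ⟨0, by simp, by simp, by simpa using hia⟩
    · push_neg at hia
      have h' : i - a < t.sum := by
        simp only [List.sum_cons] at hi; omega
      obtain ⟨j, hj1, hj2, hj3⟩ := ih _ h'
      refine ⟨j + 1, by simpa using hj1, ?_, ?_⟩
      · simp only [List.take_succ_cons, List.sum_cons]; omega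
      · simp only [List.take_succ_cons, List.sum_cons]; omega

lemma join_spec {α : Type*} : ∀ (cs : List (List α)) (i : ℕ), i < (cs.map List.length).sum →
    ∃ j, ∃ (hj : j < cs.length),
      ((cs.map List.length).take j).sum ≤ i ∧ i < ((cs.map List.length).take (j + 1)).sum ∧
      ∃ (hil : i < cs.flatten.length), cs.flatten[i]'hil ∈ cs[j]'hj := by
  intro cs
  induction cs with
  | nil => intro i hi; simp at hi
  | cons d t ih =>
    intro i hi
    by_cases hic : i < d.length
    · have hil : i < ((d :: t).flatten).length := by
        rw [List.length_flatten]
        simp only [List.map_cons, List.sum_cons]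
        omega
      refine ⟨0, by simp, by simp, by simpa using hic, hil, ?_⟩
      have hgl : ((d :: t).flatten)[i]'hil = d[i]'hic := by
        simp only [List.flatten_cons]
        exact List.getElem_append_left hic
      rw [hgl]
      simpa using List.getElem_mem hic
    · push_neg at hic
      have hi' : i - d.length < (t.map List.length).sum := by
        simp only [List.map_cons, List.sum_cons] at hi; omega
      obtain ⟨j, hj, h1, h2, hil, hmem⟩ := ih _ hi'
      have hil2 : i - d.length < (t.map List.length).sum := by
        rw [← List.length_flatten]; exact hil
      have hil' : i < ((d :: t).flatten).length := by
        rw [List.length_flatten]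
        simp only [List.map_cons, List.sum_cons]
        omega
      refine ⟨j + 1, by simpa using hj, ?_, ?_, hil', ?_⟩
      · simp only [List.map_cons, List.take_succ_cons, List.sum_cons]; omega
      · simp only [List.map_cons, List.take_succ_cons, List.sum_cons]; omega
      · have hgl : ((d :: t).flatten)[i]'hil' = (t.flatten)[i - d.length]'hil := by
          simp only [List.flatten_cons]
          exact List.getElem_append_right hic
        rw [hgl]
        simpa using hmem

lemma exists_preimage_list {α β : Type*} [DecidableEq α] (g : α → β) :
    ∀ (l : List β) (s : Multiset α), (↑l : Multiset β) = s.map g →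
    ∃ J : List α, (↑J : Multiset α) = s ∧ J.map g = l := by
  intro l
  induction l with
  | nil =>
    intro s h
    refine ⟨[], ?_, rfl⟩
    have hs : s = 0 := by
      rw [Multiset.coe_nil, eq_comm, Multiset.map_eq_zero] at h
      exact h
    simp [hs]
  | cons a t ih =>
    intro s h
    have ha : a ∈ s.map g := by rw [← h]; simp
    obtain ⟨b, hb, hba⟩ := Multiset.mem_map.mp ha
    have hs : s = b ::ₘ s.erase b := (Multiset.cons_erase hb).symm
    have key : a ::ₘ (↑t : Multiset β) = a ::ₘ (s.erase b).map g := by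
      rw [Multiset.cons_coe, h]
      conv_lhs => rw [hs]
      rw [Multiset.map_cons, hba]
    have ht := (Multiset.cons_inj_right a).mp key
    obtain ⟨J, hJ1, hJ2⟩ := ih _ ht
    refine ⟨b :: J, ?_, by simp [hJ2, hba]⟩
    rw [← Multiset.cons_coe, hJ1, ← hs]

lemma lex_aux : ∀ (i : ℕ) (l₁ l₂ : List ℕ) (h1 : i < l₁.length) (h2 : i < l₂.length),
    (∀ j, j < i → ∀ (hj1 : j < l₁.length) (hj2 : j < l₂.length), l₁[j]'hj1 = l₂[j]'hj2) →
    l₁[i]'h1 < l₂[i]'h2 → List.Lex (· < ·) l₁ l₂ := by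
  intro i
  induction i with
  | zero =>
    intro l₁ l₂ h1 h2 _ hlt
    cases l₁ with
    | nil => simp at h1
    | cons a t₁ =>
      cases l₂ with
      | nil => simp at h2
      | cons b t₂ => exact List.Lex.rel (by simpa using hlt)
  | succ i ih =>
    intro l₁ l₂ h1 h2 hpre hlt
    cases l₁ with
    | nil => simp at h1
    | cons a t₁ =>
      cases l₂ with
      | nil => simp at h2
      | cons b t₂ =>
        have hab : a = b := by
          have := hpre 0 (Nat.succ_pos i) (by simp) (by simp)
          simpa using this
        subst hab
        apply List.Lex.cons
        apply ih t₁ t₂ (by simpa using h1) (by simpa using h2) ?_ (by simpa using hlt)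
        intro j hj hj1 hj2
        have := hpre (j + 1) (Nat.succ_lt_succ hj) (by simpa using hj1) (by simpa using hj2)
        simpa using this

end AuxLemmas


theorem largest_missing_word_not_upComp {n : ℕ} (Δ : Finset (Nat.Partition n))
    (hΔ : CoSaturated Δ) (s : Equiv.Perm (Fin n))
    (hs : MonoidAlgebra.single s (1 : ℤ) ∉ Gspan ℤ (Finset.univ \ Δ) ⊔ symIdeal ℤ Δ)
    (hmax : ∀ t : Equiv.Perm (Fin n), List.Lex (· < ·) (wordOf s) (wordOf t) →
      MonoidAlgebra.single t (1 : ℤ) ∈ Gspan ℤ (Finset.univ \ Δ) ⊔ symIdeal ℤ Δ) :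
    ∀ μ ∈ Δ, ¬ UpComp s μ := by
  classical
  intro μ hμ hUp
  obtain ⟨m, X, hXne, hXuniq, hXcard, hXinc⟩ := hUp
  apply hs
  set l : List ℕ := descParts μ with hl
  have hlcoe : (↑l : Multiset ℕ) = μ.parts := by
    rw [hl]
    unfold descParts descSort
    rw [Multiset.coe_reverse, Multiset.sort_eq]
  have hlsum : l.sum = n := by
    have h := congrArg Multiset.sum hlcoe
    rw [Multiset.sum_coe] at h
    rw [h, μ.parts_sum]
  obtain ⟨J, hJcoe, hJmap⟩ := exists_preimage_list (fun k => (X k).card) l Finset.univ.val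
      (by rw [hlcoe, hXcard])
  have hJlen : J.length = m := by
    have h := congrArg Multiset.card hJcoe
    rw [Multiset.coe_card] at h
    simpa using h
  have hJnd : J.Nodup := Multiset.coe_nodup.mp (hJcoe ▸ Finset.univ.nodup)
  have hllen : l.length = m := by rw [← hJmap, List.length_map, hJlen]
  set cs : List (List (Fin n)) := J.map (fun k => (X k).sort (· ≤ ·)) with hcs
  have hcslen : cs.map List.length = l := by
    rw [hcs, List.map_map, ← hJmap]
    congr 1
    funext k
    simp [Finset.length_sort]
  have hcsJ : cs.length = J.length := by rw [hcs, List.length_map]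
  set L : List (Fin n) := cs.flatten with hL
  have hLlen : L.length = n := by rw [hL, List.length_flatten, hcslen, hlsum]
  have hLnd : L.Nodup := by
    rw [hL, List.nodup_flatten]
    constructor
    · intro l' hl'
      rw [hcs, List.mem_map] at hl'
      obtain ⟨k, _, rfl⟩ := hl'
      exact Finset.sort_nodup _ _
    · rw [hcs, List.pairwise_map]
      refine List.Pairwise.imp ?_ hJnd
      intro k k' hkk' a ha ha'
      rw [Finset.mem_sort] at ha ha'
      exact hkk' ((hXuniq a).unique ha ha')
  have hmemL : ∀ a : Fin n, a ∈ L := by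
    intro a
    obtain ⟨k, hk, -⟩ := hXuniq a
    have hkJ : k ∈ J := by
      have h : k ∈ (↑J : Multiset (Fin m)) := by
        rw [hJcoe]; exact Finset.mem_val.mpr (Finset.mem_univ k)
      exact Multiset.mem_coe.mp h
    rw [hL, List.mem_flatten]
    exact ⟨(X k).sort (· ≤ ·), List.mem_map_of_mem hkJ, (Finset.mem_sort _).mpr hk⟩
  let e : Fin L.length ≃ Fin n := List.Nodup.getEquivOfForallMemList L hLnd hmemL
  let c : Equiv.Perm (Fin n) := (finCongr hLlen.symm).trans e
  have hc : ∀ i : Fin n, ∀ (h : (i : ℕ) < L.length), c i = L[(i : ℕ)]'h := by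
    intro i h; rfl
  have hblk_lt : ∀ i : Fin n, blk l (i : ℕ) < J.length := by
    intro i
    obtain ⟨j, hj, h1, h2⟩ := blk_spec l i (by rw [hlsum]; exact i.isLt)
    rw [blk_eq_of hj h1 h2]
    omega
  let kOf : Fin n → Fin m := fun i => J.get ⟨blk l (i : ℕ), hblk_lt i⟩
  have hkey : ∀ i : Fin n, c i ∈ X (kOf i) := by
    intro i
    obtain ⟨j, hj, h1, h2, hil, hmem⟩ := join_spec cs (i : ℕ)
      (by rw [hcslen, hlsum]; exact i.isLt)
    rw [hcslen] at h1 h2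
    have hjl : j < l.length := by rw [← hcslen, List.length_map]; exact hcsJ ▸ hj
    have hbe : blk l (i : ℕ) = j := blk_eq_of hjl h1 h2
    have h3 : c i ∈ cs[j]'hj := by rw [hc i hil]; exact hmem
    have hjJ : j < J.length := hcsJ ▸ hj
    have h4 : cs[j]'hj = (X (J[j]'hjJ)).sort (· ≤ ·) := by
      simp [hcs]
    rw [h4, Finset.mem_sort] at h3
    have h5 : kOf i = J[j]'hjJ := by
      simp only [kOf, hbe]
      rfl
    rwa [h5]
  have huniq : ∀ (i : Fin n) (k : Fin m), c i ∈ X k → k = kOf i := by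
    intro i k hk
    exact (hXuniq (c i)).unique hk (hkey i)
  have hkOf_inj : ∀ i i' : Fin n, kOf i = kOf i' → blk l (i : ℕ) = blk l (i' : ℕ) := by
    intro i i' h
    simp only [kOf] at h
    have h2 := List.nodup_iff_injective_get.mp hJnd h
    simpa using h2
  have hY1 : ∀ σ, IsYoung μ σ → ∀ (k : Fin m), ∀ x ∈ X k, (c * σ * c⁻¹) x ∈ X k := by
    intro σ hσ k x hx
    set i := c⁻¹ x with hi
    have hcix : c i = x := c.apply_symm_apply x
    have hk : k = kOf i := huniq i k (by rw [hcix]; exact hx)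
    have happ : (c * σ * c⁻¹) x = c (σ i) := by
      simp [Equiv.Perm.mul_apply, hi]
    have hb : blk l ((σ i : Fin n) : ℕ) = blk l ((i : Fin n) : ℕ) := by
      have := hσ i
      rw [← hl] at this
      exact this
    have hkk : kOf (σ i) = kOf i := by
      simp only [kOf]
      congr 1
      exact Fin.ext hb
    rw [happ, hk, ← hkk]
    exact hkey (σ i)
  have hY2 : ∀ σ, (∀ (k : Fin m), ∀ x ∈ X k, (c * σ * c⁻¹) x ∈ X k) → IsYoung μ σ := by
    intro σ hσ i
    have h1 : c (σ i) ∈ X (kOf i) := by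
      have h := hσ (kOf i) (c i) (hkey i)
      have happ : (c * σ * c⁻¹) (c i) = c (σ i) := by
        simp [Equiv.Perm.mul_apply]
      rwa [happ] at h
    have h2 : kOf i = kOf (σ i) := huniq (σ i) (kOf i) h1
    have h3 := hkOf_inj i (σ i) h2
    rw [← hl]
    exact h3.symm
  let Hf : Finset (Equiv.Perm (Fin n)) :=
    Finset.univ.filter (fun h => ∀ (k : Fin m), ∀ x ∈ X k, h x ∈ X k)
  have hT : MonoidAlgebra.single (s * c) (1 : ℤ) * youngSym ℤ μ *
      MonoidAlgebra.single c⁻¹ (1 : ℤ) = ∑ h ∈ Hf, MonoidAlgebra.single (s * h) (1 : ℤ) := by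
    rw [youngSym, Finset.mul_sum, Finset.sum_mul]
    refine Finset.sum_bij (fun σ _ => c * σ * c⁻¹) ?_ ?_ ?_ ?_
    · intro σ hσ
      rw [Finset.mem_filter] at hσ
      simp only [Hf, Finset.mem_filter]
      exact ⟨Finset.mem_univ _, hY1 σ hσ.2⟩
    · intro a ha b hb hab
      have h1 : c * a = c * b := mul_right_cancel hab
      exact mul_left_cancel h1
    · intro h hh
      simp only [Hf, Finset.mem_filter] at hh
      refine ⟨c⁻¹ * h * c, ?_, by group⟩
      rw [Finset.mem_filter]
      refine ⟨Finset.mem_univ _, hY2 _ ?_⟩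
      have hcc : c * (c⁻¹ * h * c) * c⁻¹ = h := by group
      rw [hcc]
      exact hh.2
    · intro σ hσ
      simp only [MonoidAlgebra.single_mul_single, one_mul, mul_one]
      congr 1
  have hTmem : MonoidAlgebra.single (s * c) (1 : ℤ) * youngSym ℤ μ *
      MonoidAlgebra.single c⁻¹ (1 : ℤ) ∈ symIdeal ℤ Δ :=
    Submodule.subset_span ⟨μ, hμ, _, _, rfl⟩
  have h1Hf : (1 : Equiv.Perm (Fin n)) ∈ Hf := by
    simp only [Hf, Finset.mem_filter]
    exact ⟨Finset.mem_univ _, fun k x hx => by simpa using hx⟩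
  have hwlen : ∀ σ : Equiv.Perm (Fin n), (wordOf σ).length = n := by
    intro σ; simp [wordOf]
  have hwget : ∀ (σ : Equiv.Perm (Fin n)) (j : ℕ) (hj : j < n),
      (wordOf σ)[j]'(by rw [hwlen]; exact hj) = (σ ⟨j, hj⟩ : ℕ) := by
    intro σ j hj
    simp [wordOf]
  have hlex : ∀ h : Equiv.Perm (Fin n), (∀ (k : Fin m), ∀ x ∈ X k, h x ∈ X k) → h ≠ 1 →
      List.Lex (· < ·) (wordOf s) (wordOf (s * h)) := by
    intro h hh hne
    have hD : (Finset.univ.filter (fun i : Fin n => h i ≠ i)).Nonempty := by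
      by_contra hco
      rw [Finset.not_nonempty_iff_eq_empty, Finset.filter_eq_empty_iff] at hco
      refine hne (Equiv.ext fun i => ?_)
      have := hco (Finset.mem_univ i)
      simpa using not_not.mp this
    set i0 : Fin n := (Finset.univ.filter (fun i : Fin n => h i ≠ i)).min' hD with hi0
    have hfix : ∀ j : Fin n, j < i0 → h j = j := by
      intro j hj
      by_contra hne'
      have hle : i0 ≤ j :=
        Finset.min'_le _ j (Finset.mem_filter.mpr ⟨Finset.mem_univ j, hne'⟩)
      exact absurd hj (not_lt.mpr hle)
    have hmove : h i0 ≠ i0 := (Finset.mem_filter.mp (Finset.min'_mem _ hD)).2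
    have hgt : i0 < h i0 := by
      rcases lt_or_gt_of_ne hmove with hlt | hgt
      · exfalso
        have h2 : h (h i0) = h i0 := hfix _ hlt
        exact hmove (h.injective h2)
      · exact hgt
    obtain ⟨k, hk, -⟩ := hXuniq i0
    have hk2 : h i0 ∈ X k := hh k i0 hk
    have hslt : s i0 < s (h i0) := hXinc k i0 hk (h i0) hk2 hgt
    apply lex_aux (i0 : ℕ) _ _ (by rw [hwlen]; exact i0.isLt) (by rw [hwlen]; exact i0.isLt)
    · intro j hj hj1 hj2
      have hjn : j < n := lt_trans hj i0.isLt
      rw [hwget s j hjn, hwget (s * h) j hjn]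
      have hfj : h ⟨j, hjn⟩ = ⟨j, hjn⟩ := hfix _ (by rw [Fin.lt_def]; exact hj)
      simp [Equiv.Perm.mul_apply, hfj]
    · rw [hwget s i0 i0.isLt, hwget (s * h) i0 i0.isLt]
      simp only [Fin.eta, Equiv.Perm.mul_apply]
      exact hslt
  have hterm : ∀ h ∈ Hf.erase 1, MonoidAlgebra.single (s * h) (1 : ℤ) ∈
      Gspan ℤ (Finset.univ \ Δ) ⊔ symIdeal ℤ Δ := by
    intro h hh
    rw [Finset.mem_erase] at hh
    have hh2 := hh.2
    simp only [Hf, Finset.mem_filter] at hh2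
    exact hmax _ (hlex h hh2.2 hh.1)
  have hsplit : MonoidAlgebra.single s (1 : ℤ)
      = (MonoidAlgebra.single (s * c) (1 : ℤ) * youngSym ℤ μ *
          MonoidAlgebra.single c⁻¹ (1 : ℤ))
        - ∑ h ∈ Hf.erase 1, MonoidAlgebra.single (s * h) (1 : ℤ) := by
    rw [hT, ← Finset.sum_erase_add Hf _ h1Hf, mul_one]
    abel
  rw [hsplit]
  exact Submodule.sub_mem _ (Submodule.mem_sup_right hTmem) (Submodule.sum_mem _ hterm)
end

section
/- Let n, r be positive integers with r > n, and let R be a commutative ring. The annihilator in RSym(r) of the r-fold tensor power V^{⊗r} of a free R-module V of rank n (with Sym(r) acting by place permutations) is the two-sided ideal generated by the single element Σ_{σ∈Sym(X)} sgn(σ)σ, where X is any subset of {1,...,r} of size n+1. If r ≤ n the annihilator is zero. -/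
open MonoidAlgebra Equiv

open scoped TensorProduct

/-- The place-permutation representation of `Sym(r)` on the `r`-fold tensor power of `V`. -/
noncomputable def tensorRep (R : Type) [CommRing R] (V : Type) [AddCommGroup V] [Module R V]
    (r : ℕ) : Representation R (Equiv.Perm (Fin r)) (⨂[R] (_ : Fin r), V) where
  toFun σ := (PiTensorProduct.reindex R (fun _ : Fin r => V) σ).toLinearMap
  map_one' :=
    congrArg LinearEquiv.toLinearMap
      (PiTensorProduct.reindex_refl (R := R) (s := fun _ : Fin r => V))
  map_mul' := fun σ τ =>
    (congrArg LinearEquiv.toLinearMap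
      (PiTensorProduct.reindex_trans (e := τ) (e' := σ) (R := R) (s := fun _ : Fin r => V))).symm

/-- `Σ_{σ ∈ Sym(X)} sgn(σ) σ` for a subset `X` of `{1,…,r}`. -/
noncomputable def sgnSymOn (R : Type) [CommRing R] {r : ℕ} (X : Finset (Fin r)) :
    MonoidAlgebra R (Equiv.Perm (Fin r)) :=
  ∑ σ ∈ Finset.univ.filter (fun σ : Equiv.Perm (Fin r) => ∀ i ∉ X, σ i = i),
    MonoidAlgebra.single σ ((Equiv.Perm.sign σ : ℤ) : R)


noncomputable def wrd {r : ℕ} (σ : Equiv.Perm (Fin r)) : Lex (Fin r → Fin r) :=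
  toLex (fun p => σ p)

theorem wrd_lt {r : ℕ} {u v : Equiv.Perm (Fin r)} (p0 : Fin r) (h1 : ∀ q, q < p0 → u q = v q)
    (h2 : u p0 < v p0) : wrd u < wrd v := ⟨p0, h1, h2⟩

private theorem wrd_rel_wf {r : ℕ} (sgnf : Bool) :
    WellFounded (fun a b : Equiv.Perm (Fin r) =>
      if sgnf then wrd a < wrd b else wrd b < wrd a) := by
  set rl := fun a b : Equiv.Perm (Fin r) =>
      if sgnf then wrd a < wrd b else wrd b < wrd a with hrl
  haveI ht : IsTrans (Equiv.Perm (Fin r)) rl := by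
    constructor; intro a b c hab hbc
    cases sgnf
    · simp only [hrl, Bool.false_eq_true, if_false] at *
      exact _root_.trans hbc hab
    · simp only [hrl, if_true] at *
      exact _root_.trans hab hbc
  haveI hi : IsIrrefl (Equiv.Perm (Fin r)) rl := by
    constructor; intro a h
    cases sgnf <;> simp only [hrl, if_true, if_false, Bool.false_eq_true] at h <;>
      exact lt_irrefl _ h
  exact Finite.wellFounded_of_trans_of_irrefl rl

theorem wrd_induction {r : ℕ} (C : Equiv.Perm (Fin r) → Prop)
    (ih : ∀ σ, (∀ τ, wrd τ < wrd σ → C τ) → C σ) : ∀ σ, C σ := by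
  intro σ
  exact (wrd_rel_wf true).induction σ (by simpa using ih)

theorem exists_wrd_max {r : ℕ} (s : Finset (Equiv.Perm (Fin r))) (hs : s.Nonempty) :
    ∃ σ ∈ s, ∀ τ ∈ s, ¬ wrd σ < wrd τ := by
  obtain ⟨a, ha, hmin⟩ := (wrd_rel_wf (r := r) false).has_min s hs
  exact ⟨a, ha, fun τ hτ hlt => hmin τ hτ (by simpa using hlt)⟩

def HasDec (n : ℕ) {r : ℕ} (σ : Equiv.Perm (Fin r)) : Prop :=
  ∃ f : Fin (n+1) → Fin r, StrictMono f ∧ ∀ a b : Fin (n+1), a < b → σ (f b) < σ (f a)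

def DecEnd {r : ℕ} (σ : Equiv.Perm (Fin r)) (p : Fin r) (m : ℕ) : Prop :=
  ∃ f : Fin (m+1) → Fin r, StrictMono f ∧ (∀ a b : Fin (m+1), a < b → σ (f b) < σ (f a)) ∧
    f (Fin.last m) = p

open Classical in
noncomputable def Lv {r : ℕ} (σ : Equiv.Perm (Fin r)) (p : Fin r) : ℕ :=
  Nat.findGreatest (DecEnd σ p) r

theorem decEnd_zero {r : ℕ} (σ : Equiv.Perm (Fin r)) (p : Fin r) : DecEnd σ p 0 := by
  have hss : ∀ a b : Fin (0+1), a < b → False := by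
    intro a b hab
    have ha := a.isLt; have hb := b.isLt
    have : (a : ℕ) < (b : ℕ) := hab
    omega
  exact ⟨fun _ => p, fun a b hab => absurd hab (fun h => hss a b h),
    fun a b hab => absurd hab (fun h => hss a b h), rfl⟩

open Classical in
theorem decEnd_spec {r : ℕ} (σ : Equiv.Perm (Fin r)) (p : Fin r) : DecEnd σ p (Lv σ p) :=
  Nat.findGreatest_spec (Nat.zero_le r) (decEnd_zero σ p)

theorem Lv_lt {n r : ℕ} {σ : Equiv.Perm (Fin r)} (hσ : ¬ HasDec n σ) (p : Fin r) : Lv σ p < n := by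
  by_contra hle
  push_neg at hle
  obtain ⟨f, hmono, hdec, -⟩ := decEnd_spec σ p
  refine hσ ⟨fun a => f ⟨a.1, by omega⟩, fun a b hab => hmono ?_, fun a b hab => hdec _ _ ?_⟩
  · rw [Fin.mk_lt_mk]; exact hab
  · rw [Fin.mk_lt_mk]; exact hab

theorem fiber_incr {r : ℕ} {σ : Equiv.Perm (Fin r)} {p q : Fin r} (hpq : p < q)
    (hLv : Lv σ p = Lv σ q) : σ p < σ q := by
  rcases lt_trichotomy (σ p) (σ q) with h1 | h1 | h1
  · exact h1
  · exact absurd (σ.injective h1) (ne_of_lt hpq)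
  exfalso
  obtain ⟨f, hmono, hdec, hlast⟩ := decEnd_spec σ p
  have hfle : ∀ a, f a ≤ p := fun a => hlast ▸ hmono.monotone (Fin.le_last a)
  have hige : ∀ a, σ p ≤ σ (f a) := by
    intro a
    rcases eq_or_lt_of_le (Fin.le_last a) with ha | ha
    · rw [ha, hlast]
    · exact le_of_lt (hlast ▸ hdec a (Fin.last _) ha)
  set g : Fin (Lv σ p + 1 + 1) → Fin r := Fin.snoc f q with hg
  have hgcast : ∀ a : Fin (Lv σ p + 1), g (Fin.castSucc a) = f a := fun a => by simp [hg]
  have hglast : g (Fin.last (Lv σ p + 1)) = q := by simp [hg]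
  have hgmono : StrictMono g := by
    intro a b hab
    rcases Fin.eq_castSucc_or_eq_last b with ⟨b', rfl⟩ | rfl
    · rcases Fin.eq_castSucc_or_eq_last a with ⟨a', rfl⟩ | rfl
      · rw [hgcast, hgcast]
        exact hmono (by rw [Fin.lt_def] at hab ⊢; simpa using hab)
      · exact absurd (hab.trans (Fin.castSucc_lt_last b')) (lt_irrefl _)
    · rw [hglast]
      rcases Fin.eq_castSucc_or_eq_last a with ⟨a', rfl⟩ | rfl
      · rw [hgcast]; exact lt_of_le_of_lt (hfle a') hpq
      · exact absurd hab (lt_irrefl _)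
  have hgdec : ∀ a b : Fin (Lv σ p + 1 + 1), a < b → σ (g b) < σ (g a) := by
    intro a b hab
    rcases Fin.eq_castSucc_or_eq_last b with ⟨b', rfl⟩ | rfl
    · rcases Fin.eq_castSucc_or_eq_last a with ⟨a', rfl⟩ | rfl
      · rw [hgcast, hgcast]
        exact hdec _ _ (by rw [Fin.lt_def] at hab ⊢; simpa using hab)
      · exact absurd (hab.trans (Fin.castSucc_lt_last b')) (lt_irrefl _)
    · rw [hglast]
      rcases Fin.eq_castSucc_or_eq_last a with ⟨a', rfl⟩ | rfl
      · rw [hgcast]; exact lt_of_lt_of_le h1 (hige a')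
      · exact absurd hab (lt_irrefl _)
  have hbound : Lv σ p + 1 + 1 ≤ r := by
    have := Fintype.card_le_of_injective g hgmono.injective
    simpa using this
  have hge : Lv σ p + 1 ≤ Lv σ q := by
    classical
    exact Nat.le_findGreatest (by omega) ⟨g, hgmono, hgdec, hglast⟩
  omega

theorem exists_min_moved {r : ℕ} (ρ : Equiv.Perm (Fin r)) (hρ : ρ ≠ 1) :
    ∃ p0 : Fin r, p0 < ρ p0 ∧ ∀ q, q < p0 → ρ q = q := by
  classical
  set s := Finset.univ.filter (fun p => ρ p ≠ p) with hs
  have hsne : s.Nonempty := by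
    rcases Finset.eq_empty_or_nonempty s with he | hne
    · exfalso
      refine hρ (Equiv.ext fun p => ?_)
      have hp : p ∉ s := he ▸ Finset.notMem_empty p
      simpa [hs] using hp
    · exact hne
  set p0 := s.min' hsne with hp0
  have hmem : ρ p0 ≠ p0 := by
    have := s.min'_mem hsne
    simpa [hs] using this
  have hfix : ∀ q, q < p0 → ρ q = q := by
    intro q hq
    by_contra hne
    exact absurd (s.min'_le q (by simp [hs, hne])) (not_le.2 hq)
  refine ⟨p0, ?_, hfix⟩
  rcases lt_trichotomy p0 (ρ p0) with h | h | h
  · exact h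
  · exact absurd h.symm hmem
  · exact absurd (ρ.injective (hfix _ h)) hmem

theorem coset_lex {n r : ℕ} {σ τ : Equiv.Perm (Fin r)} (hσ : ¬ HasDec n σ) (hne : τ ≠ σ)
    (h : ∀ p : Fin r, Lv σ (τ.symm p) = Lv σ (σ.symm p)) : wrd σ < wrd τ := by
  set ρ : Equiv.Perm (Fin r) := σ⁻¹ * τ with hρdef
  have hρa : ∀ q, ρ q = σ.symm (τ q) := fun q => rfl
  have h' : ∀ q, Lv σ (ρ q) = Lv σ q := by
    intro q
    have h2 := h (τ q)
    rw [Equiv.symm_apply_apply] at h2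
    rw [hρa]; exact h2.symm
  have hρ1 : ρ ≠ 1 := by
    intro hc
    apply hne
    have h3 : σ * ρ = σ * 1 := by rw [hc]
    rwa [hρdef, ← mul_assoc, mul_inv_cancel, one_mul, mul_one] at h3
  obtain ⟨p0, hlt, hfix⟩ := exists_min_moved ρ hρ1
  have hτσ : ∀ q, τ q = σ (ρ q) := by
    intro q; rw [hρa, Equiv.apply_symm_apply]
  refine wrd_lt p0 (fun q hq => ?_) ?_
  · rw [hτσ q, hfix q hq]
  · rw [hτσ p0]; exact fiber_incr hlt (h' p0).symm

theorem mul_lex_lt {n r : ℕ} {σ : Equiv.Perm (Fin r)} {f : Fin (n+1) → Fin r}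
    (hmono : StrictMono f) (hdec : ∀ a b : Fin (n+1), a < b → σ (f b) < σ (f a))
    {τ : Equiv.Perm (Fin r)} (hτY : ∀ p, p ∉ Finset.image f Finset.univ → τ p = p)
    (hτ1 : τ ≠ 1) : wrd (σ * τ) < wrd σ := by
  classical
  obtain ⟨p0, hlt, hfix⟩ := exists_min_moved τ hτ1
  have hp0Y : p0 ∈ Finset.image f Finset.univ := by
    by_contra hc
    exact absurd (hτY p0 hc) (ne_of_gt hlt)
  have hτp0Y : τ p0 ∈ Finset.image f Finset.univ := by
    by_contra hc
    exact absurd (τ.injective (hτY _ hc)) (ne_of_gt hlt)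
  obtain ⟨a, -, ha⟩ := Finset.mem_image.1 hp0Y
  obtain ⟨b, -, hb⟩ := Finset.mem_image.1 hτp0Y
  have hab : a < b := hmono.lt_iff_lt.1 (by rw [ha, hb]; exact hlt)
  refine wrd_lt p0 (fun q hq => ?_) ?_
  · rw [Equiv.Perm.mul_apply, hfix q hq]
  · rw [Equiv.Perm.mul_apply]
    have := hdec a b hab
    rw [ha, hb] at this
    exact this

section TensorLayer
variable (R : Type) [CommRing R] (n r : ℕ)

/-- basis tensors -/
noncomputable def bT (i : Fin r → Fin n) : ⨂[R] (_ : Fin r), (Fin n → R) :=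
  PiTensorProduct.tprod R (fun p => Pi.single (i p) (1 : R))

/-- coordinate functionals -/
noncomputable def Fj (j : Fin r → Fin n) : (⨂[R] (_ : Fin r), (Fin n → R)) →ₗ[R] R :=
  PiTensorProduct.lift
    ((MultilinearMap.mkPiAlgebra R (Fin r) R).compLinearMap
      (fun p => LinearMap.proj (j p)))

theorem Fj_tprod (j : Fin r → Fin n) (f : Fin r → (Fin n → R)) :
    Fj R n r j (PiTensorProduct.tprod R f) = ∏ p, f p (j p) := by
  simp [Fj, MultilinearMap.mkPiAlgebra_apply]

theorem Fj_bT (i j : Fin r → Fin n) :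
    Fj R n r j (bT R n r i) = if i = j then 1 else 0 := by
  classical
  rw [bT, Fj_tprod]
  by_cases h : i = j
  · subst h; simp
  · rw [if_neg h]
    obtain ⟨p, hp⟩ := Function.ne_iff.1 h
    refine Finset.prod_eq_zero (Finset.mem_univ p) ?_
    simp [Pi.single_apply, hp]

theorem tensorRep_tprod (σ : Equiv.Perm (Fin r)) (f : Fin r → (Fin n → R)) :
    tensorRep R (Fin n → R) r σ (PiTensorProduct.tprod R f)
      = PiTensorProduct.tprod R (fun p => f (σ.symm p)) := by
  show (PiTensorProduct.reindex R (fun _ : Fin r => (Fin n → R)) σ).toLinearMap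
    (PiTensorProduct.tprod R f) = _
  simp [PiTensorProduct.reindex_tprod]

theorem tensorRep_bT (σ : Equiv.Perm (Fin r)) (i : Fin r → Fin n) :
    tensorRep R (Fin n → R) r σ (bT R n r i) = bT R n r (i ∘ ⇑σ.symm) := by
  rw [bT, tensorRep_tprod]; rfl

theorem tprod_expand (f : Fin r → (Fin n → R)) :
    PiTensorProduct.tprod R f = ∑ i : Fin r → Fin n, (∏ p, f p (i p)) • bT R n r i := by
  classical
  have hf : ∀ p, f p = ∑ c : Fin n, f p c • (Pi.single c 1 : Fin n → R) := by
    intro p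
    ext d
    rw [Finset.sum_apply]
    simp [Pi.single_apply, mul_comm]
  calc PiTensorProduct.tprod R f
      = PiTensorProduct.tprod R (fun p => ∑ c : Fin n, f p c • (Pi.single c 1 : Fin n → R)) := by
        congr 1; funext p; exact hf p
    _ = ∑ i : Fin r → Fin n, PiTensorProduct.tprod R (fun p => f p (i p) • (Pi.single (i p) 1 : Fin n → R)) :=
        MultilinearMap.map_sum _ _
    _ = ∑ i : Fin r → Fin n, (∏ p, f p (i p)) • bT R n r i := by
        refine Finset.sum_congr rfl fun i _ => ?_
        rw [bT, MultilinearMap.map_smul_univ]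

theorem span_bT_top :
    Submodule.span R (Set.range (bT R n r)) = ⊤ := by
  rw [eq_top_iff, ← PiTensorProduct.span_tprod_eq_top, Submodule.span_le]
  rintro x ⟨f, rfl⟩
  rw [tprod_expand]
  exact Submodule.sum_mem _ fun i _ =>
    Submodule.smul_mem _ _ (Submodule.subset_span ⟨i, rfl⟩)

/-- the module map we study -/
noncomputable def phi : MonoidAlgebra R (Equiv.Perm (Fin r)) →ₗ[R]
    Module.End R (⨂[R] (_ : Fin r), (Fin n → R)) :=
  (tensorRep R (Fin n → R) r).asAlgebraHom.toLinearMap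

theorem phi_apply_bT (a : MonoidAlgebra R (Equiv.Perm (Fin r))) (i : Fin r → Fin n) :
    phi R n r a (bT R n r i) = ∑ σ : Equiv.Perm (Fin r), a.coeff σ • bT R n r (i ∘ ⇑σ.symm) := by
  classical
  have ha : a = ∑ σ ∈ a.coeff.support, MonoidAlgebra.single σ (a.coeff σ) := by
    conv_lhs => rw [← MonoidAlgebra.sum_coeff_single a]
    rw [Finsupp.sum]
  have hsingle : ∀ (σ : Equiv.Perm (Fin r)) (c : R),
      phi R n r (MonoidAlgebra.single σ c) (bT R n r i) = c • bT R n r (i ∘ ⇑σ.symm) := by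
    intro σ c
    have h1 : phi R n r (MonoidAlgebra.single σ c)
        = c • (tensorRep R (Fin n → R) r σ) :=
      Representation.asAlgebraHom_single _ _ _
    rw [h1, LinearMap.smul_apply, tensorRep_bT]
  calc phi R n r a (bT R n r i)
      = (∑ σ ∈ a.coeff.support, phi R n r (MonoidAlgebra.single σ (a.coeff σ))) (bT R n r i) := by
        conv_lhs => rw [ha]
        rw [map_sum]
    _ = ∑ σ ∈ a.coeff.support, phi R n r (MonoidAlgebra.single σ (a.coeff σ)) (bT R n r i) :=
        LinearMap.sum_apply _ _ _
    _ = ∑ σ ∈ a.coeff.support, a.coeff σ • bT R n r (i ∘ ⇑σ.symm) := by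
        refine Finset.sum_congr rfl fun σ _ => hsingle σ (a.coeff σ)
    _ = ∑ σ : Equiv.Perm (Fin r), a.coeff σ • bT R n r (i ∘ ⇑σ.symm) := by
        refine Finset.sum_subset (Finset.subset_univ _) fun σ _ hσ => ?_
        rw [Finsupp.notMem_support_iff.1 hσ, zero_smul]

theorem phi_single_bT (σ : Equiv.Perm (Fin r)) (c : R) (i : Fin r → Fin n) :
    phi R n r (MonoidAlgebra.single σ c) (bT R n r i) = c • bT R n r (i ∘ ⇑σ.symm) := by
  have h1 : phi R n r (MonoidAlgebra.single σ c) = c • (tensorRep R (Fin n → R) r σ) :=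
    Representation.asAlgebraHom_single _ _ _
  rw [h1, LinearMap.smul_apply, tensorRep_bT]

theorem ker_coeff (a : MonoidAlgebra R (Equiv.Perm (Fin r))) (ha : phi R n r a = 0)
    (i j : Fin r → Fin n) :
    ∑ σ ∈ Finset.univ.filter (fun σ : Equiv.Perm (Fin r) => i ∘ ⇑σ.symm = j), a.coeff σ = 0 := by
  classical
  have h0 : phi R n r a (bT R n r i) = 0 := by rw [ha]; rfl
  have h1 := congrArg (Fj R n r j) h0
  rw [phi_apply_bT, map_sum, map_zero] at h1
  have h2 : ∀ σ : Equiv.Perm (Fin r),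
      Fj R n r j (a.coeff σ • bT R n r (i ∘ ⇑σ.symm))
        = if i ∘ ⇑σ.symm = j then a.coeff σ else 0 := by
    intro σ
    rw [map_smul, Fj_bT, smul_eq_mul, mul_ite, mul_one, mul_zero]
  rw [Finset.sum_congr rfl (fun σ _ => h2 σ)] at h1
  rw [Finset.sum_filter]
  exact h1

theorem phi_sgnSymOn (X : Finset (Fin r)) (hX : n < X.card) :
    phi R n r (sgnSymOn R X) = 0 := by
  classical
  have hbT : ∀ i : Fin r → Fin n, phi R n r (sgnSymOn R X) (bT R n r i) = 0 := by
    intro i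
    obtain ⟨x, hx, y, hy, hxy, hixy⟩ :=
      Finset.exists_ne_map_eq_of_card_lt_of_maps_to
        (show (Finset.univ : Finset (Fin n)).card < X.card by simpa using hX)
        (fun p _ => Finset.mem_univ (i p))
    rw [sgnSymOn, map_sum, LinearMap.sum_apply]
    refine Finset.sum_involution (fun σ _ => σ * Equiv.swap x y) ?_ ?_ ?_ ?_
    · intro σ hσ
      rw [phi_single_bT, phi_single_bT]
      have hsgn : ((Equiv.Perm.sign (σ * Equiv.swap x y) : ℤ) : R)
          = -((Equiv.Perm.sign σ : ℤ) : R) := by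
        rw [Equiv.Perm.sign_mul, Equiv.Perm.sign_swap hxy]
        push_cast
        ring
      have hfun : i ∘ ⇑(σ * Equiv.swap x y).symm = i ∘ ⇑σ.symm := by
        funext p
        have hs : (σ * Equiv.swap x y).symm p = Equiv.swap x y (σ.symm p) := by
          show (σ * Equiv.swap x y)⁻¹ p = _
          rw [mul_inv_rev, Equiv.Perm.mul_apply, Equiv.swap_inv]
          rfl
        show i ((σ * Equiv.swap x y).symm p) = i (σ.symm p)
        rw [hs]
        rcases eq_or_ne (σ.symm p) x with h | h
        · rw [h, Equiv.swap_apply_left]; exact hixy.symm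
        rcases eq_or_ne (σ.symm p) y with h' | h'
        · rw [h', Equiv.swap_apply_right]; exact hixy
        · rw [Equiv.swap_apply_of_ne_of_ne h h']
      rw [hsgn, hfun]
      module
    · intro σ _ _
      intro hc
      have hc' : σ * Equiv.swap x y = σ := hc
      apply hxy
      have h1 : Equiv.swap x y = 1 := by
        have := mul_left_cancel (a := σ) (by rw [hc', mul_one] : σ * Equiv.swap x y = σ * 1)
        exact this
      have := congrArg (fun e : Equiv.Perm (Fin r) => e x) h1
      simpa [Equiv.swap_apply_left] using this.symm
    · intro σ hσ
      simp only [Finset.mem_filter, Finset.mem_univ, true_and] at hσ ⊢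
      intro p hp
      rw [Equiv.Perm.mul_apply, Equiv.swap_apply_of_ne_of_ne
        (fun (h : p = x) => hp (h.symm ▸ hx)) (fun (h : p = y) => hp (h.symm ▸ hy)), hσ p hp]
    · intro σ hσ
      show σ * Equiv.swap x y * Equiv.swap x y = σ
      rw [mul_assoc, Equiv.swap_mul_self, mul_one]
  apply LinearMap.ext
  intro v
  rw [LinearMap.zero_apply]
  have hv : v ∈ Submodule.span R (Set.range (bT R n r)) := by
    rw [span_bT_top]; trivial
  induction hv using Submodule.span_induction with
  | mem w hw => obtain ⟨i, rfl⟩ := hw; rw [hbT]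
  | zero => rw [map_zero]
  | add u w _ _ hu hw => rw [map_add, hu, hw, add_zero]
  | smul c u _ hu => rw [map_smul, hu, smul_zero]

/-! ### ideal layer -/

theorem mul_mem_ideal (X : Finset (Fin r)) {u : MonoidAlgebra R (Equiv.Perm (Fin r))}
    (hu : u ∈ Submodule.span R {x | ∃ a b, x = a * sgnSymOn R X * b})
    (y z : MonoidAlgebra R (Equiv.Perm (Fin r))) :
    y * u * z ∈ Submodule.span R {x | ∃ a b, x = a * sgnSymOn R X * b} := by
  induction hu using Submodule.span_induction with
  | mem w hw =>
    obtain ⟨a, b, rfl⟩ := hw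
    refine Submodule.subset_span ⟨y * a, b * z, ?_⟩
    simp only [mul_assoc]
  | zero => rw [mul_zero, zero_mul]; exact Submodule.zero_mem _
  | add u1 u2 _ _ h1 h2 =>
    rw [mul_add, add_mul]; exact Submodule.add_mem _ h1 h2
  | smul c u1 _ h1 =>
    rw [mul_smul_comm, smul_mul_assoc]; exact Submodule.smul_mem _ _ h1

theorem exists_conj_perm (X Y : Finset (Fin r)) (h : X.card = Y.card) :
    ∃ g : Equiv.Perm (Fin r), (∀ p, p ∈ X → g p ∈ Y) ∧ (∀ p, p ∉ X → g p ∉ Y) := by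
  classical
  have hc : Xᶜ.card = Yᶜ.card := by rw [Finset.card_compl, Finset.card_compl, h]
  let e1 : {x // x ∈ X} ≃ {x // x ∈ Y} := Finset.equivOfCardEq h
  let e2 : {x // x ∈ Xᶜ} ≃ {x // x ∈ Yᶜ} := Finset.equivOfCardEq hc
  let e2' : {x : Fin r // ¬ x ∈ X} ≃ {x : Fin r // ¬ x ∈ Y} :=
    (Equiv.subtypeEquivRight (fun x => (Finset.mem_compl (a := x)).symm)).trans
      (e2.trans (Equiv.subtypeEquivRight (fun x => Finset.mem_compl (a := x))))
  refine ⟨(Equiv.sumCompl (· ∈ X)).symm.trans ((e1.sumCongr e2').trans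
    (Equiv.sumCompl (· ∈ Y))), fun p hp => ?_, fun p hp => ?_⟩
  · simp only [Equiv.trans_apply, Equiv.sumCompl_symm_apply_of_pos hp, Equiv.sumCongr_apply,
      Sum.map_inl, Equiv.sumCompl_apply_inl]
    exact (e1 ⟨p, hp⟩).2
  · simp only [Equiv.trans_apply, Equiv.sumCompl_symm_apply_of_neg hp, Equiv.sumCongr_apply,
      Sum.map_inr, Equiv.sumCompl_apply_inr]
    exact (e2' ⟨p, hp⟩).2

theorem sgnSymOn_conj (g : Equiv.Perm (Fin r)) (X Y : Finset (Fin r))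
    (hg1 : ∀ p, p ∈ X → g p ∈ Y) (hg2 : ∀ p, p ∉ X → g p ∉ Y) :
    MonoidAlgebra.single g (1:R) * sgnSymOn R X * MonoidAlgebra.single g⁻¹ (1:R)
      = sgnSymOn R Y := by
  classical
  rw [sgnSymOn, Finset.mul_sum, Finset.sum_mul, sgnSymOn]
  refine Finset.sum_bij' (fun τ _ => g * τ * g⁻¹) (fun τ' _ => g⁻¹ * τ' * g) ?_ ?_ ?_ ?_ ?_
  · -- membership forward
    intro τ hτ
    simp only [Finset.mem_filter, Finset.mem_univ, true_and] at hτ ⊢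
    intro p hp
    have hgp : g⁻¹ p ∉ X := by
      intro hc
      exact hp (by simpa using hg1 _ hc)
    rw [Equiv.Perm.mul_apply, Equiv.Perm.mul_apply, hτ _ hgp]
    simp
  · -- membership backward
    intro τ' hτ'
    simp only [Finset.mem_filter, Finset.mem_univ, true_and] at hτ' ⊢
    intro q hq
    have hgq : g q ∉ Y := hg2 q hq
    rw [Equiv.Perm.mul_apply, Equiv.Perm.mul_apply, hτ' _ hgq]
    simp
  · intro τ _; group
  · intro τ' _; group
  · intro τ _
    rw [MonoidAlgebra.single_mul_single, MonoidAlgebra.single_mul_single, one_mul, mul_one]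
    congr 1
    have hs : Equiv.Perm.sign (g * τ * g⁻¹) = Equiv.Perm.sign τ := by
      rw [Equiv.Perm.sign_mul, Equiv.Perm.sign_mul, Equiv.Perm.sign_inv, mul_right_comm,
        Int.units_mul_self, one_mul]
    rw [hs]

theorem sgnSymOn_mem_ideal (X Y : Finset (Fin r)) (h : Y.card = X.card) :
    sgnSymOn R Y ∈ Submodule.span R {x | ∃ a b, x = a * sgnSymOn R X * b} := by
  obtain ⟨g, hg1, hg2⟩ := exists_conj_perm (r := r) X Y h.symm
  rw [← sgnSymOn_conj (r := r) R g X Y hg1 hg2]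
  exact Submodule.subset_span
    ⟨MonoidAlgebra.single g (1:R), MonoidAlgebra.single g⁻¹ (1:R), rfl⟩

end TensorLayer


section StepAB
variable (R : Type) [CommRing R] {n r : ℕ}

theorem support_subset_MD {D : Set (Equiv.Perm (Fin r))}
    {u : MonoidAlgebra R (Equiv.Perm (Fin r))}
    (hu : u ∈ Submodule.span R ((fun σ => MonoidAlgebra.single σ (1:R)) '' D)) :
    ∀ σ : Equiv.Perm (Fin r), u.coeff σ ≠ 0 → σ ∈ D := by
  classical
  induction hu using Submodule.span_induction with
  | mem w hw =>
    obtain ⟨σ, hσ, rfl⟩ := hw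
    intro τ hτ
    by_cases h : σ = τ
    · exact h ▸ hσ
    · exact absurd (Finsupp.single_eq_of_ne' h) hτ
  | zero => intro τ hτ; exact absurd rfl hτ
  | add u v _ _ ihu ihv =>
    intro τ hτ
    by_cases h : u.coeff τ = 0
    · refine ihv τ ?_
      intro hv
      exact hτ (by rw [MonoidAlgebra.coeff_add, Finsupp.add_apply, h, hv, add_zero])
    · exact ihu τ h
  | smul c u _ ih =>
    intro τ hτ
    refine ih τ ?_
    intro hu0
    exact hτ (by rw [MonoidAlgebra.coeff_smul_apply, hu0, smul_zero])

theorem stepA (X : Finset (Fin r)) (hX : X.card = n + 1) (σ : Equiv.Perm (Fin r)) :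
    MonoidAlgebra.single σ (1:R) ∈
      Submodule.span R {x | ∃ a b, x = a * sgnSymOn R X * b} ⊔
      Submodule.span R ((fun σ => MonoidAlgebra.single σ (1:R))
        '' {σ : Equiv.Perm (Fin r) | ¬ HasDec n σ}) := by
  classical
  induction σ using wrd_induction with
  | ih σ ih => ?_
  by_cases hσ : HasDec n σ
  · obtain ⟨f, hmono, hdec⟩ := hσ
    set Y := Finset.image f Finset.univ with hY
    have hYc : Y.card = X.card := by
      rw [hY, Finset.card_image_of_injective _ hmono.injective, hX]
      simp
    have heY : sgnSymOn R Y ∈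
        Submodule.span R {x | ∃ a b, x = a * sgnSymOn R X * b} :=
      sgnSymOn_mem_ideal R r X Y hYc
    set SY := Finset.univ.filter
      (fun τ : Equiv.Perm (Fin r) => ∀ i ∉ Y, τ i = i) with hSY
    have hkey : MonoidAlgebra.single σ (1:R) * sgnSymOn R Y
        = ∑ τ ∈ SY, MonoidAlgebra.single (σ * τ) ((Equiv.Perm.sign τ : ℤ) : R) := by
      rw [sgnSymOn, Finset.mul_sum]
      exact Finset.sum_congr rfl fun τ _ => by
        rw [MonoidAlgebra.single_mul_single, one_mul]
    have h1Y : (1 : Equiv.Perm (Fin r)) ∈ SY := by simp [hSY]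
    have hsplit : ∑ τ ∈ SY, MonoidAlgebra.single (σ * τ) ((Equiv.Perm.sign τ : ℤ) : R)
        = MonoidAlgebra.single σ (1:R) +
          ∑ τ ∈ SY.erase 1, MonoidAlgebra.single (σ * τ) ((Equiv.Perm.sign τ : ℤ) : R) := by
      rw [← Finset.add_sum_erase _ _ h1Y, mul_one]
      norm_num
    have heq : MonoidAlgebra.single σ (1:R)
        = MonoidAlgebra.single σ (1:R) * sgnSymOn R Y -
          ∑ τ ∈ SY.erase 1, MonoidAlgebra.single (σ * τ) ((Equiv.Perm.sign τ : ℤ) : R) := by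
      rw [hkey, hsplit, add_sub_cancel_right]
    rw [heq]
    refine Submodule.sub_mem _ ?_ ?_
    · exact Submodule.mem_sup_left (by
        have := mul_mem_ideal R r X heY (MonoidAlgebra.single σ (1:R)) 1
        rwa [mul_one] at this)
    · refine Submodule.sum_mem _ fun τ hτ => ?_
      have hτ1 : τ ≠ 1 := Finset.ne_of_mem_erase hτ
      have hτY : ∀ p, p ∉ Y → τ p = p := by
        have := Finset.mem_of_mem_erase hτ
        simpa [hSY] using this
      have hlt : wrd (σ * τ) < wrd σ := mul_lex_lt hmono hdec (hY ▸ hτY) hτ1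
      have hsingle : MonoidAlgebra.single (σ * τ) ((Equiv.Perm.sign τ : ℤ) : R)
          = ((Equiv.Perm.sign τ : ℤ) : R) • MonoidAlgebra.single (σ * τ) (1:R) := by
        rw [MonoidAlgebra.smul_single', mul_one]
      rw [hsingle]
      exact Submodule.smul_mem _ _ (ih _ hlt)
  · exact Submodule.mem_sup_right (Submodule.subset_span ⟨σ, hσ, rfl⟩)

theorem decompose_mem (X : Finset (Fin r)) (hX : X.card = n + 1)
    (a : MonoidAlgebra R (Equiv.Perm (Fin r))) :
    a ∈ Submodule.span R {x | ∃ a b, x = a * sgnSymOn R X * b} ⊔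
      Submodule.span R ((fun σ => MonoidAlgebra.single σ (1:R))
        '' {σ : Equiv.Perm (Fin r) | ¬ HasDec n σ}) := by
  classical
  have ha : a = ∑ σ ∈ a.coeff.support, MonoidAlgebra.single σ (a.coeff σ) := by
    conv_lhs => rw [← MonoidAlgebra.sum_coeff_single a]
    rw [Finsupp.sum]
  rw [ha]
  refine Submodule.sum_mem _ fun σ _ => ?_
  have : MonoidAlgebra.single σ (a.coeff σ) = a.coeff σ • MonoidAlgebra.single σ (1:R) := by
    rw [MonoidAlgebra.smul_single', mul_one]
  rw [this]
  exact Submodule.smul_mem _ _ (stepA R X hX σ)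

set_option maxHeartbeats 2000000 in
theorem stepB (m : MonoidAlgebra R (Equiv.Perm (Fin r)))
    (hmD : m ∈ Submodule.span R ((fun σ => MonoidAlgebra.single σ (1:R))
      '' {σ : Equiv.Perm (Fin r) | ¬ HasDec n σ}))
    (hm : phi R n r m = 0) : m = 0 := by
  classical
  by_contra hm0
  have hne : m.coeff.support.Nonempty :=
    Finsupp.support_nonempty_iff.2 (mt MonoidAlgebra.coeff_eq_zero.1 hm0)
  obtain ⟨σ0, hσ0s, hmax⟩ := exists_wrd_max m.coeff.support hne
  have hσ0D : ¬ HasDec n σ0 := support_subset_MD R hmD σ0 (Finsupp.mem_support_iff.1 hσ0s)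
  set i0 : Fin r → Fin n := fun p => ⟨Lv σ0 p, Lv_lt hσ0D p⟩ with hi0
  have hcoef := ker_coeff R n r m hm i0 (i0 ∘ ⇑σ0.symm)
  have hsum : ∑ σ ∈ Finset.univ.filter
      (fun σ : Equiv.Perm (Fin r) => i0 ∘ ⇑σ.symm = i0 ∘ ⇑σ0.symm), m.coeff σ = m.coeff σ0 := by
    refine Finset.sum_eq_single σ0 ?_ ?_
    · intro τ hτf hτne
      simp only [Finset.mem_filter, Finset.mem_univ, true_and] at hτf
      have hLv : ∀ p : Fin r, Lv σ0 (τ.symm p) = Lv σ0 (σ0.symm p) := by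
        intro p
        have := congrFun hτf p
        simpa [hi0, Fin.mk.injEq] using this
      have hlt : wrd σ0 < wrd τ := coset_lex hσ0D hτne hLv
      by_contra hmτ
      exact hmax τ (Finsupp.mem_support_iff.2 hmτ) hlt
    · intro h
      exfalso
      apply h
      simp
  rw [hsum] at hcoef
  exact absurd hcoef (Finsupp.mem_support_iff.1 hσ0s)

end StepAB

theorem annihilator_tensor_power (R : Type) [CommRing R] (n r : ℕ) (hn : 0 < n) (hr : 0 < r) :
    (∀ X : Finset (Fin r), X.card = n + 1 → n < r →
      LinearMap.ker (tensorRep R (Fin n → R) r).asAlgebraHom.toLinearMap =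
        Submodule.span R {x | ∃ a b, x = a * sgnSymOn R X * b}) ∧
    (r ≤ n → LinearMap.ker (tensorRep R (Fin n → R) r).asAlgebraHom.toLinearMap = ⊥) := by
  classical
  have hker : ∀ a : MonoidAlgebra R (Equiv.Perm (Fin r)),
      a ∈ LinearMap.ker (tensorRep R (Fin n → R) r).asAlgebraHom.toLinearMap ↔
        phi R n r a = 0 := fun a => LinearMap.mem_ker
  constructor
  · intro X hX _hnr
    have hXgt : n < X.card := by rw [hX]; omega
    have hphiX : phi R n r (sgnSymOn R X) = 0 := phi_sgnSymOn R n r X hXgt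
    -- the ideal is contained in the kernel
    have hIker : ∀ v ∈ Submodule.span R {x | ∃ a b, x = a * sgnSymOn R X * b},
        phi R n r v = 0 := by
      intro v hv
      induction hv using Submodule.span_induction with
      | mem w hw =>
        obtain ⟨a, b, rfl⟩ := hw
        have : phi R n r (a * sgnSymOn R X * b)
            = phi R n r a * phi R n r (sgnSymOn R X) * phi R n r b := by
          show (tensorRep R (Fin n → R) r).asAlgebraHom (a * sgnSymOn R X * b) = _
          rw [map_mul, map_mul]
          rfl
        rw [this, hphiX, mul_zero, zero_mul]
      | zero => rw [map_zero]
      | add u w _ _ hu hw => rw [map_add, hu, hw, add_zero]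
      | smul c u _ hu => rw [map_smul, hu, smul_zero]
    refine le_antisymm ?_ ?_
    · intro a ha
      rw [hker] at ha
      obtain ⟨u, hu, m, hmD, rfl⟩ := Submodule.mem_sup.1 (decompose_mem R X hX a)
      have hphm : phi R n r m = 0 := by
        have := hIker u hu
        have h2 : phi R n r (u + m) = 0 := ha
        rw [map_add, this, zero_add] at h2
        exact h2
      rw [stepB R m hmD hphm, add_zero]
      exact hu
    · rw [Submodule.span_le]
      rintro x ⟨a, b, rfl⟩
      rw [SetLike.mem_coe, hker]
      exact hIker _ (Submodule.subset_span ⟨a, b, rfl⟩)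
  · intro hrn
    rw [Submodule.eq_bot_iff]
    intro a ha
    rw [hker] at ha
    set i0 : Fin r → Fin n := fun p => Fin.castLE hrn p with hi0
    have hinj : Function.Injective i0 := fun p q h => by
      have hpq : (p : ℕ) = (q : ℕ) := by
        simpa [hi0] using congrArg Fin.val h
      exact Fin.ext hpq
    refine MonoidAlgebra.ext (Finsupp.ext fun σ => ?_)
    have hcoef := ker_coeff R n r a ha i0 (i0 ∘ ⇑σ.symm)
    have hfilter : Finset.univ.filter
        (fun τ : Equiv.Perm (Fin r) => i0 ∘ ⇑τ.symm = i0 ∘ ⇑σ.symm) = {σ} := by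
      refine Finset.eq_singleton_iff_unique_mem.2
        ⟨Finset.mem_filter.2 ⟨Finset.mem_univ _, rfl⟩, ?_⟩
      intro τ hτ
      simp only [Finset.mem_filter, Finset.mem_univ, true_and] at hτ
      have hsymm : τ.symm = σ.symm := Equiv.ext fun p => hinj (congrFun hτ p)
      have := congrArg Equiv.symm hsymm
      rwa [Equiv.symm_symm, Equiv.symm_symm] at this
    rw [hfilter, Finset.sum_singleton] at hcoef
    exact hcoef
end

section
/- Let n > r ≥ 1, R a commutative ring, and J the kernel of the action of RSym(n) on R·I(n,r) (functions {1,...,r}→{1,...,n} with Sym(n) acting by postcomposition). Then RSym(n)/J is free as an R-module with basis σ + J, where σ ranges over permutations of {1,...,n} whose one-line word contains a strictly increasing subsequence of length n − r. -/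
open MonoidAlgebra Equiv

/-- The action of `Sym(n)` on `I(n,r)`, the maps `{1,…,r} → {1,…,n}`, by postcomposition. -/
instance postcompAction (n r : ℕ) : MulAction (Equiv.Perm (Fin n)) (Fin r → Fin n) where
  smul σ i := ⇑σ ∘ i
  one_smul i := rfl
  mul_smul σ τ i := rfl

/-- The permutation representation of `Sym(n)` on `R·I(n,r)`. -/
noncomputable def dotyRep (R : Type) [CommRing R] (n r : ℕ) :
    Representation R (Equiv.Perm (Fin n)) ((Fin r → Fin n) →₀ R) :=
  { toFun := fun g => Finsupp.lmapDomain R R (g • ·)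
    map_one' := by ext; simp
    map_mul' := fun x y => by ext; simp [mul_smul] }


/-! ### Auxiliary development for the proof -/

namespace DotyProof

open MonoidAlgebra Equiv

variable {n r : ℕ}

/-- Lexicographic (first-difference) order on permutation one-line words. -/
def lexlt (σ τ : Equiv.Perm (Fin n)) : Prop :=
  ∃ p : Fin n, (∀ q, q < p → σ q = τ q) ∧ σ p < τ p

theorem lexlt_trans {σ τ ρ : Equiv.Perm (Fin n)} (h1 : lexlt σ τ) (h2 : lexlt τ ρ) :
    lexlt σ ρ := by
  obtain ⟨p1, e1, l1⟩ := h1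
  obtain ⟨p2, e2, l2⟩ := h2
  rcases lt_trichotomy p1 p2 with h | h | h
  · exact ⟨p1, fun q hq => (e1 q hq).trans (e2 q (hq.trans h)), l1.trans_eq (e2 p1 h)⟩
  · exact ⟨p1, fun q hq => (e1 q hq).trans (e2 q (hq.trans_eq h)), by
      subst h; exact l1.trans l2⟩
  · exact ⟨p2, fun q hq => (e1 q (hq.trans h)).trans (e2 q hq), (e1 p2 h).trans_lt l2⟩

theorem lexlt_irrefl (σ : Equiv.Perm (Fin n)) : ¬ lexlt σ σ := by
  rintro ⟨p, _, hp⟩; exact lt_irrefl _ hp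

theorem lexlt_wf : WellFounded (lexlt (n := n)) := by
  haveI : IsTrans (Equiv.Perm (Fin n)) lexlt := ⟨fun _ _ _ => lexlt_trans⟩
  haveI : IsIrrefl (Equiv.Perm (Fin n)) lexlt := ⟨lexlt_irrefl⟩
  exact Finite.wellFounded_of_trans_of_irrefl _

theorem lexgt_wf : WellFounded (fun σ τ : Equiv.Perm (Fin n) => lexlt τ σ) := by
  haveI : IsTrans (Equiv.Perm (Fin n)) (fun σ τ => lexlt τ σ) :=
    ⟨fun _ _ _ h1 h2 => lexlt_trans h2 h1⟩
  haveI : IsIrrefl (Equiv.Perm (Fin n)) (fun σ τ => lexlt τ σ) := ⟨lexlt_irrefl⟩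
  exact Finite.wellFounded_of_trans_of_irrefl _

/-- If `τ` is increasing on `C` and `σ` agrees with `τ` off `C`, with `σ ≠ τ`,
then `τ` is lexicographically smaller than `σ`. -/
theorem lexlt_of_agree {σ τ : Equiv.Perm (Fin n)} {C : Finset (Fin n)}
    (hinc : ∀ p ∈ C, ∀ q ∈ C, p < q → τ p < τ q)
    (hagr : ∀ p, p ∉ C → σ p = τ p) (hne : σ ≠ τ) : lexlt τ σ := by
  classical
  set D := Finset.univ.filter (fun p => σ p ≠ τ p) with hD
  have hDne : D.Nonempty := by
    by_contra h
    apply hne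
    ext p
    by_contra hp
    exact h ⟨p, Finset.mem_filter.2 ⟨Finset.mem_univ _, fun he => hp (by rw [he])⟩⟩
  set p0 := D.min' hDne with hp0
  have hp0D : p0 ∈ D := D.min'_mem hDne
  have hp0ne : σ p0 ≠ τ p0 := (Finset.mem_filter.1 hp0D).2
  have hmin : ∀ q, q < p0 → σ q = τ q := by
    intro q hq
    by_contra hqq
    exact absurd (D.min'_le q (Finset.mem_filter.2 ⟨Finset.mem_univ _, hqq⟩)) (not_le.2 hq)
  have hp0C : p0 ∈ C := by
    by_contra h
    exact hp0ne (hagr _ h)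
  refine ⟨p0, fun q hq => (hmin q hq).symm, ?_⟩
  rcases lt_or_gt_of_ne hp0ne with h | h
  · exfalso
    set c := τ.symm (σ p0) with hc
    have hτc : τ c = σ p0 := τ.apply_symm_apply _
    have hcC : c ∈ C := by
      by_contra hcn
      have h1 : σ c = τ c := hagr _ hcn
      have h2 : σ c = σ p0 := by rw [h1, hτc]
      have h3 : c = p0 := σ.injective h2
      exact hcn (h3 ▸ hp0C)
    have hcp0 : c < p0 := by
      rcases lt_trichotomy c p0 with h' | h' | h'
      · exact h'
      · exfalso; rw [h'] at hτc; exact hp0ne hτc.symm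
      · exact absurd (hinc p0 hp0C c hcC h') (by rw [hτc]; exact not_lt.2 h.le)
    have h1 : σ c = τ c := hmin c hcp0
    have h2 : σ c = σ p0 := by rw [h1, hτc]
    exact absurd (σ.injective h2) hcp0.ne
  · exact h

/-- If `σ` is decreasing on each fiber of `c` and `τ ≠ 1` preserves the value blocks
(fibers of `c ∘ σ⁻¹`), then `τ * σ` is lexicographically smaller than `σ`. -/
theorem lexlt_mul {σ τ : Equiv.Perm (Fin n)} (c : Fin n → ℕ)
    (hdec : ∀ p q : Fin n, p < q → c p = c q → σ q < σ p)
    (hτ : ∀ w, c (σ.symm (τ w)) = c (σ.symm w)) (hne : τ ≠ 1) : lexlt (τ * σ) σ := by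
  classical
  set D := Finset.univ.filter (fun p => τ (σ p) ≠ σ p) with hD
  have hDne : D.Nonempty := by
    by_contra h
    apply hne
    ext w
    have hall : ∀ p, τ (σ p) = σ p := by
      intro p
      by_contra hp
      exact h ⟨p, Finset.mem_filter.2 ⟨Finset.mem_univ _, hp⟩⟩
    have := hall (σ.symm w)
    rw [σ.apply_symm_apply] at this
    exact congrArg Fin.val this
  set p0 := D.min' hDne with hp0
  have hp0D : p0 ∈ D := D.min'_mem hDne
  have hp0ne : τ (σ p0) ≠ σ p0 := (Finset.mem_filter.1 hp0D).2
  have hmin : ∀ q, q < p0 → τ (σ q) = σ q := by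
    intro q hq
    by_contra hqq
    exact absurd (D.min'_le q (Finset.mem_filter.2 ⟨Finset.mem_univ _, hqq⟩)) (not_le.2 hq)
  refine ⟨p0, fun q hq => hmin q hq, ?_⟩
  rcases lt_or_gt_of_ne hp0ne with h | h
  · exact h
  · exfalso
    set w := τ (σ p0) with hw
    set q0 := σ.symm w with hq0
    have hσq0 : σ q0 = w := σ.apply_symm_apply _
    have hcq0 : c q0 = c p0 := by
      have := hτ (σ p0)
      rwa [σ.symm_apply_apply] at this
    have hq0ne : q0 ≠ p0 := by
      intro e
      apply hp0ne
      rw [← hσq0, e]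
    have hq0lt : q0 < p0 := by
      rcases lt_trichotomy q0 p0 with h' | h' | h'
      · exact h'
      · exact absurd h' hq0ne
      · exact absurd (hdec p0 q0 h' hcq0.symm) (by rw [hσq0]; exact not_lt.2 h.le)
    have hfix : τ (σ q0) = σ q0 := hmin q0 hq0lt
    rw [hσq0] at hfix
    exact hp0ne (τ.injective (by rw [hfix]))

/-- Any permutation without an increasing subsequence of length `n - r` has its positions
covered by at most `n - r - 1` decreasing chains (fibers of `c`). -/
theorem exists_chain (hnr : r < n) (σ : Equiv.Perm (Fin n))
    (hσ : ¬ ∃ f : Fin (n - r) → Fin n, StrictMono f ∧ StrictMono (fun k => σ (f k))) :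
    ∃ c : Fin n → ℕ, (∀ p q : Fin n, p < q → c p = c q → σ q < σ p) ∧
      (Finset.univ.image c).card + r < n := by
  classical
  set P : Fin n → ℕ → Prop := fun p k => ∃ T : Finset (Fin n),
    (∀ a ∈ T, ∀ b ∈ T, a < b → σ a < σ b) ∧ p ∈ T ∧ (∀ q ∈ T, q ≤ p) ∧ T.card = k with hP
  set c : Fin n → ℕ := fun p => Nat.findGreatest (P p) n with hc
  have hn0 : 0 < n := lt_of_le_of_lt (Nat.zero_le r) hnr
  have hP1 : ∀ p, P p 1 := by
    intro p
    refine ⟨{p}, ?_, Finset.mem_singleton_self p, ?_, Finset.card_singleton p⟩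
    · intro a ha b hb hab
      rw [Finset.mem_singleton] at ha hb
      subst ha; subst hb; exact absurd hab (lt_irrefl _)
    · intro q hq; rw [Finset.mem_singleton] at hq; subst hq; exact le_refl _
  have hc1 : ∀ p, 1 ≤ c p := fun p => Nat.le_findGreatest hn0 (hP1 p)
  have hcspec : ∀ p, P p (c p) := fun p => Nat.findGreatest_spec hn0 (hP1 p)
  have hub : ∀ p, c p < n - r := by
    intro p
    by_contra hle
    push_neg at hle
    obtain ⟨T, hTinc, _, _, hTcard⟩ := hcspec p
    obtain ⟨T', hT'sub, hT'card⟩ := Finset.exists_subset_card_eq (hTcard ▸ hle)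
    apply hσ
    refine ⟨fun k => ((T'.orderIsoOfFin hT'card k : {x // x ∈ T'}) : Fin n), ?_, ?_⟩
    · intro a b hab
      exact (T'.orderIsoOfFin hT'card).strictMono hab
    · intro a b hab
      have h1 : ((T'.orderIsoOfFin hT'card a : {x // x ∈ T'}) : Fin n) ∈ T :=
        hT'sub (T'.orderIsoOfFin hT'card a).2
      have h2 : ((T'.orderIsoOfFin hT'card b : {x // x ∈ T'}) : Fin n) ∈ T :=
        hT'sub (T'.orderIsoOfFin hT'card b).2
      exact hTinc _ h1 _ h2 ((T'.orderIsoOfFin hT'card).strictMono hab)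
  refine ⟨c, ?_, ?_⟩
  · intro p q hpq hcpq
    by_contra hnot
    push_neg at hnot
    have hne : σ p ≠ σ q := fun e => absurd (σ.injective e) hpq.ne
    have hlt : σ p < σ q := lt_of_le_of_ne hnot hne
    obtain ⟨T, hTinc, hpT, hTmax, hTcard⟩ := hcspec p
    have hqT : q ∉ T := fun hq => absurd (hTmax q hq) (not_le.2 hpq)
    have hnew : P q (c p + 1) := by
      refine ⟨insert q T, ?_, Finset.mem_insert_self _ _, ?_, ?_⟩
      · intro a ha b hb hab
        rcases Finset.mem_insert.1 ha with rfl | ha'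
        · rcases Finset.mem_insert.1 hb with rfl | hb'
          · exact absurd hab (lt_irrefl _)
          · exact absurd (lt_of_lt_of_le hab (le_trans (hTmax b hb') hpq.le)) (lt_irrefl _)
        · rcases Finset.mem_insert.1 hb with rfl | hb'
          · rcases eq_or_lt_of_le (hTmax a ha') with rfl | h'
            · exact hlt
            · exact lt_trans (hTinc a ha' p hpT h') hlt
          · exact hTinc a ha' b hb' hab
      · intro x hx
        rcases Finset.mem_insert.1 hx with rfl | hx'
        · exact le_refl _
        · exact le_trans (hTmax x hx') hpq.le
      · rw [Finset.card_insert_of_notMem hqT, hTcard]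
    have hge : c p + 1 ≤ c q := by
      apply Nat.le_findGreatest _ hnew
      calc c p + 1 ≤ (n - r - 1) + 1 := by
            have := hub p; omega
        _ ≤ n := by omega
    omega
  · have hsub : Finset.univ.image c ⊆ Finset.Icc 1 (n - r - 1) := by
      intro k hk
      obtain ⟨p, _, rfl⟩ := Finset.mem_image.1 hk
      exact Finset.mem_Icc.2 ⟨hc1 p, by have := hub p; omega⟩
    have hcard := Finset.card_le_card hsub
    rw [Nat.card_Icc] at hcard
    omega

theorem doty_single_apply (R : Type) [CommRing R] (n r : ℕ) (u : Equiv.Perm (Fin n)) (a : R)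
    (i : Fin r → Fin n) (b : R) :
    ((dotyRep R n r).asAlgebraHom (MonoidAlgebra.single u a)) (Finsupp.single i b) =
      Finsupp.single (fun k => u (i k)) (a * b) := by
  rw [Representation.asAlgebraHom_single, LinearMap.smul_apply]
  show a • (Finsupp.lmapDomain R R (u • ·)) (Finsupp.single i b) = _
  rw [Finsupp.lmapDomain_apply, Finsupp.mapDomain_single, Finsupp.smul_single]
  rfl

/-- The signed sum over a block-preserving subgroup with at most `n - r - 1` blocks
annihilates `R·I(n,r)`. -/
theorem sgn_sum_mem_ker (R : Type) [CommRing R] (n r : ℕ) (σ : Equiv.Perm (Fin n))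
    (blk : Fin n → ℕ) (hcard : (Finset.univ.image blk).card + r < n) :
    (∑ τ ∈ Finset.univ.filter (fun τ : Equiv.Perm (Fin n) => ∀ w, blk (τ w) = blk w),
        MonoidAlgebra.single (τ * σ) ((Equiv.Perm.sign τ : ℤ) : R)) ∈
      LinearMap.ker (dotyRep R n r).asAlgebraHom.toLinearMap := by
  classical
  rw [LinearMap.mem_ker]
  show (dotyRep R n r).asAlgebraHom _ = 0
  rw [map_sum]
  apply Finsupp.lhom_ext
  intro i b
  rw [LinearMap.zero_apply, LinearMap.coe_sum, Finset.sum_apply]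
  have hterm : ∀ τ : Equiv.Perm (Fin n),
      ((dotyRep R n r).asAlgebraHom (MonoidAlgebra.single (τ * σ) ((Equiv.Perm.sign τ : ℤ) : R)))
        (Finsupp.single i b) =
      Finsupp.single (fun k => τ (σ (i k))) (((Equiv.Perm.sign τ : ℤ) : R) * b) := by
    intro τ
    rw [doty_single_apply]
    rfl
  rw [Finset.sum_congr rfl (fun τ _ => hterm τ)]
  set i1 : Fin r → Fin n := fun k => σ (i k) with hi1
  have himg : (Finset.univ.image i1).card ≤ r := by
    calc (Finset.univ.image i1).card ≤ (Finset.univ : Finset (Fin r)).card :=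
          Finset.card_image_le
      _ = r := by simp
  have hU : (Finset.univ.image blk).card < ((Finset.univ.image i1)ᶜ : Finset (Fin n)).card := by
    rw [Finset.card_compl]
    simp only [Fintype.card_fin]
    omega
  obtain ⟨w1, hw1, w2, hw2, hw12, hblk⟩ :=
    Finset.exists_ne_map_eq_of_card_lt_of_maps_to hU
      (fun w _ => Finset.mem_image_of_mem blk (Finset.mem_univ w))
  have hw1i : ∀ k, i1 k ≠ w1 := by
    intro k hk
    rw [Finset.mem_compl] at hw1
    exact hw1 (hk ▸ Finset.mem_image_of_mem i1 (Finset.mem_univ k))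
  have hw2i : ∀ k, i1 k ≠ w2 := by
    intro k hk
    rw [Finset.mem_compl] at hw2
    exact hw2 (hk ▸ Finset.mem_image_of_mem i1 (Finset.mem_univ k))
  set t := Equiv.swap w1 w2 with ht
  have htK : ∀ w, blk (t w) = blk w := by
    intro w
    by_cases h1 : w = w1
    · subst h1; rw [ht, Equiv.swap_apply_left]; exact hblk.symm
    · by_cases h2 : w = w2
      · subst h2; rw [ht, Equiv.swap_apply_right]; exact hblk
      · rw [ht, Equiv.swap_apply_of_ne_of_ne h1 h2]
  apply Finset.sum_involution (fun τ _ => τ * t)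
  · intro τ hτ
    have hpoint : (fun k => (τ * t) (σ (i k))) = fun k => τ (σ (i k)) := by
      funext k
      show τ (t (i1 k)) = τ (i1 k)
      rw [ht, Equiv.swap_apply_of_ne_of_ne (hw1i k) (hw2i k)]
    rw [hpoint]
    have hsgn : ((Equiv.Perm.sign (τ * t) : ℤ) : R) = -((Equiv.Perm.sign τ : ℤ) : R) := by
      rw [ht, Equiv.Perm.sign_mul, Equiv.Perm.sign_swap hw12]
      push_cast
      ring
    rw [hsgn, ← Finsupp.single_add]
    rw [neg_mul, add_neg_cancel]
    exact Finsupp.single_zero _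
  · intro τ _ _
    intro e
    have ht1 : t = 1 := mul_left_cancel (a := τ) (by rw [mul_one]; exact e)
    have := congrArg (fun (u : Equiv.Perm (Fin n)) => u w1) ht1
    simp only [ht, Equiv.swap_apply_left, Equiv.Perm.one_apply] at this
    exact hw12 this.symm
  · intro τ hτ
    rw [Finset.mem_filter] at hτ ⊢
    refine ⟨Finset.mem_univ _, fun w => ?_⟩
    rw [Equiv.Perm.mul_apply, hτ.2 (t w), htK w]
  · intro τ _
    rw [mul_assoc, ht, Equiv.swap_mul_self, mul_one]

/-- Linear independence of the claimed basis in the quotient. -/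
theorem doty_indep (R : Type) [CommRing R] (n r : ℕ) (hr : 0 < r) (hnr : r < n) :
    LinearIndependent R (fun τ : {σ : Equiv.Perm (Fin n) //
        ∃ f : Fin (n - r) → Fin n, StrictMono f ∧ StrictMono (fun k => σ (f k))} =>
      (Submodule.Quotient.mk (MonoidAlgebra.single (τ : Equiv.Perm (Fin n)) (1 : R)) :
        MonoidAlgebra R (Equiv.Perm (Fin n)) ⧸
          LinearMap.ker (dotyRep R n r).asAlgebraHom.toLinearMap)) := by
  classical
  set Sub := {σ : Equiv.Perm (Fin n) //
    ∃ f : Fin (n - r) → Fin n, StrictMono f ∧ StrictMono (fun k => σ (f k))} with hSub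
  rw [linearIndependent_iff]
  intro l hl
  by_contra hl0
  have hsupp : l.support.Nonempty := Finsupp.support_nonempty_iff.2 hl0
  set x : MonoidAlgebra R (Equiv.Perm (Fin n)) :=
    ∑ τ ∈ l.support, MonoidAlgebra.single (τ : Equiv.Perm (Fin n)) (l τ) with hx
  have hxker : x ∈ LinearMap.ker (dotyRep R n r).asAlgebraHom.toLinearMap := by
    rw [← Submodule.Quotient.mk_eq_zero]
    rw [Finsupp.linearCombination_apply, Finsupp.sum] at hl
    calc (Submodule.Quotient.mk x : MonoidAlgebra R (Equiv.Perm (Fin n)) ⧸ _)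
        = ∑ τ ∈ l.support, (Submodule.Quotient.mk
            (MonoidAlgebra.single (τ : Equiv.Perm (Fin n)) (l τ))) := by
          rw [hx]
          exact map_sum (LinearMap.ker (dotyRep R n r).asAlgebraHom.toLinearMap).mkQ _ _
      _ = ∑ τ ∈ l.support, l τ • (Submodule.Quotient.mk
            (MonoidAlgebra.single (τ : Equiv.Perm (Fin n)) (1 : R))) := by
          refine Finset.sum_congr rfl fun τ _ => ?_
          rw [show MonoidAlgebra.single ((τ : Equiv.Perm (Fin n))) (l τ)
              = l τ • MonoidAlgebra.single ((τ : Equiv.Perm (Fin n))) (1 : R) from by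
            rw [MonoidAlgebra.smul_single, smul_eq_mul, mul_one]]
          exact Submodule.Quotient.mk_smul _ _ _
      _ = 0 := hl
  obtain ⟨m, hmsupp, hmmax⟩ :=
    (InvImage.wf (fun τ : Sub => (τ : Equiv.Perm (Fin n))) lexgt_wf).has_min
      (l.support : Set Sub) (by exact_mod_cast hsupp)
  obtain ⟨f, hf1, hf2⟩ := m.2
  set C : Finset (Fin n) := Finset.univ.image f with hC
  have hCcard : C.card = n - r := by
    rw [hC, Finset.card_image_of_injective _ hf1.injective, Finset.card_univ, Fintype.card_fin]
  have hPcard : (Cᶜ : Finset (Fin n)).card = r := by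
    rw [Finset.card_compl, hCcard, Fintype.card_fin]
    omega
  set j : Fin r → Fin n := fun k => ((Cᶜ : Finset (Fin n)).orderIsoOfFin hPcard k : Fin n) with hj
  have hjsurj : ∀ p, p ∉ C → ∃ k, j k = p := by
    intro p hp
    refine ⟨((Cᶜ).orderIsoOfFin hPcard).symm ⟨p, Finset.mem_compl.2 hp⟩, ?_⟩
    show ((((Cᶜ : Finset (Fin n)).orderIsoOfFin hPcard)
        ((((Cᶜ : Finset (Fin n))).orderIsoOfFin hPcard).symm
          ⟨p, Finset.mem_compl.2 hp⟩) : {x // x ∈ (Cᶜ : Finset (Fin n))}) : Fin n) = p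
    rw [OrderIso.apply_symm_apply]
  have h0 : (dotyRep R n r).asAlgebraHom x = 0 := LinearMap.mem_ker.1 hxker
  have h1 : ((dotyRep R n r).asAlgebraHom x) (Finsupp.single j (1 : R)) = 0 := by
    rw [h0]; rfl
  rw [hx, map_sum, LinearMap.coe_sum, Finset.sum_apply] at h1
  have h2 : ∀ τ : Sub,
      ((dotyRep R n r).asAlgebraHom (MonoidAlgebra.single (τ : Equiv.Perm (Fin n)) (l τ)))
        (Finsupp.single j (1 : R)) =
      Finsupp.single (fun k => (τ : Equiv.Perm (Fin n)) (j k)) (l τ) := by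
    intro τ
    rw [doty_single_apply, mul_one]
  rw [Finset.sum_congr rfl (fun τ _ => h2 τ)] at h1
  have h3 := congrArg (fun F : (Fin r → Fin n) →₀ R =>
    F (fun k => (m : Equiv.Perm (Fin n)) (j k))) h1
  simp only [Finsupp.finset_sum_apply, Finsupp.coe_zero, Pi.zero_apply] at h3
  rw [Finset.sum_eq_single_of_mem m hmsupp] at h3
  · rw [Finsupp.single_eq_same] at h3
    exact (Finsupp.mem_support_iff.1 hmsupp) h3
  · intro τ hτsupp hτm
    rw [Finsupp.single_apply, if_neg]
    intro he
    have hagr : ∀ p, p ∉ C → (τ : Equiv.Perm (Fin n)) p = (m : Equiv.Perm (Fin n)) p := by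
      intro p hp
      obtain ⟨k, rfl⟩ := hjsurj p hp
      exact congrFun he k
    have hinc : ∀ p ∈ C, ∀ q ∈ C, p < q →
        (m : Equiv.Perm (Fin n)) p < (m : Equiv.Perm (Fin n)) q := by
      intro p hp q hq hpq
      obtain ⟨a, _, rfl⟩ := Finset.mem_image.1 hp
      obtain ⟨b, _, rfl⟩ := Finset.mem_image.1 hq
      exact hf2 (hf1.lt_iff_lt.1 hpq)
    have hne : (τ : Equiv.Perm (Fin n)) ≠ (m : Equiv.Perm (Fin n)) :=
      fun e => hτm (Subtype.ext e)
    exact hmmax τ hτsupp (lexlt_of_agree hinc hagr hne)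

/-- The claimed basis spans the quotient. -/
theorem doty_span (R : Type) [CommRing R] (n r : ℕ) (hr : 0 < r) (hnr : r < n) :
    ⊤ ≤ Submodule.span R (Set.range (fun τ : {σ : Equiv.Perm (Fin n) //
        ∃ f : Fin (n - r) → Fin n, StrictMono f ∧ StrictMono (fun k => σ (f k))} =>
      (Submodule.Quotient.mk (MonoidAlgebra.single (τ : Equiv.Perm (Fin n)) (1 : R)) :
        MonoidAlgebra R (Equiv.Perm (Fin n)) ⧸
          LinearMap.ker (dotyRep R n r).asAlgebraHom.toLinearMap))) := by
  classical
  set J := LinearMap.ker (dotyRep R n r).asAlgebraHom.toLinearMap with hJ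
  set v : {σ : Equiv.Perm (Fin n) //
      ∃ f : Fin (n - r) → Fin n, StrictMono f ∧ StrictMono (fun k => σ (f k))} →
      MonoidAlgebra R (Equiv.Perm (Fin n)) ⧸ J :=
    fun τ => Submodule.Quotient.mk (MonoidAlgebra.single (τ : Equiv.Perm (Fin n)) (1 : R))
    with hv
  have key : ∀ σ : Equiv.Perm (Fin n),
      (Submodule.Quotient.mk (MonoidAlgebra.single σ (1 : R)) :
        MonoidAlgebra R (Equiv.Perm (Fin n)) ⧸ J) ∈ Submodule.span R (Set.range v) := by
    intro σ
    induction σ using lexlt_wf.induction with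
    | _ σ IH =>
      by_cases hσ : ∃ f : Fin (n - r) → Fin n, StrictMono f ∧ StrictMono (fun k => σ (f k))
      · exact Submodule.subset_span ⟨⟨σ, hσ⟩, rfl⟩
      · obtain ⟨c, hdec, hccard⟩ := exists_chain hnr σ hσ
        set blk : Fin n → ℕ := fun w => c (σ.symm w) with hblk
        have hbcard : (Finset.univ.image blk).card + r < n := by
          have hsub : Finset.univ.image blk ⊆ Finset.univ.image c := by
            intro k hk
            obtain ⟨w, _, rfl⟩ := Finset.mem_image.1 hk
            exact Finset.mem_image_of_mem c (Finset.mem_univ _)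
          have := Finset.card_le_card hsub
          omega
        set K := Finset.univ.filter
          (fun τ : Equiv.Perm (Fin n) => ∀ w, blk (τ w) = blk w) with hK
        have h1K : (1 : Equiv.Perm (Fin n)) ∈ K := by
          rw [hK, Finset.mem_filter]
          exact ⟨Finset.mem_univ _, fun w => by rw [Equiv.Perm.one_apply]⟩
        have hgker := sgn_sum_mem_ker R n r σ blk hbcard
        have hsplit : MonoidAlgebra.single σ (1 : R) =
            (∑ τ ∈ K, MonoidAlgebra.single (τ * σ) ((Equiv.Perm.sign τ : ℤ) : R)) -
              ∑ τ ∈ K.erase 1, MonoidAlgebra.single (τ * σ) ((Equiv.Perm.sign τ : ℤ) : R) := by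
          rw [← Finset.add_sum_erase K _ h1K]
          simp only [one_mul, Equiv.Perm.sign_one, Units.val_one, Int.cast_one]
          abel
        rw [hsplit, Submodule.Quotient.mk_sub]
        have hzero : (Submodule.Quotient.mk
            (∑ τ ∈ K, MonoidAlgebra.single (τ * σ) ((Equiv.Perm.sign τ : ℤ) : R)) :
              MonoidAlgebra R (Equiv.Perm (Fin n)) ⧸ J) = 0 :=
          (Submodule.Quotient.mk_eq_zero _).2 hgker
        rw [hzero, zero_sub]
        apply Submodule.neg_mem
        have hmk : (Submodule.Quotient.mk
            (∑ τ ∈ K.erase 1, MonoidAlgebra.single (τ * σ) ((Equiv.Perm.sign τ : ℤ) : R)) :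
              MonoidAlgebra R (Equiv.Perm (Fin n)) ⧸ J) =
            ∑ τ ∈ K.erase 1, ((Equiv.Perm.sign τ : ℤ) : R) •
              (Submodule.Quotient.mk (MonoidAlgebra.single (τ * σ) (1 : R)) :
                MonoidAlgebra R (Equiv.Perm (Fin n)) ⧸ J) := by
          rw [show (Submodule.Quotient.mk
              (∑ τ ∈ K.erase 1, MonoidAlgebra.single (τ * σ) ((Equiv.Perm.sign τ : ℤ) : R)) :
                MonoidAlgebra R (Equiv.Perm (Fin n)) ⧸ J) = J.mkQ _ from rfl, map_sum]
          refine Finset.sum_congr rfl fun τ _ => ?_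
          rw [show MonoidAlgebra.single (τ * σ) ((Equiv.Perm.sign τ : ℤ) : R) =
              ((Equiv.Perm.sign τ : ℤ) : R) • MonoidAlgebra.single (τ * σ) (1 : R) from by
            rw [MonoidAlgebra.smul_single, smul_eq_mul, mul_one]]
          exact Submodule.Quotient.mk_smul _ _ _
        rw [hmk]
        apply Submodule.sum_mem
        intro τ hτ
        apply Submodule.smul_mem
        apply IH
        have hτK : τ ∈ K := Finset.mem_of_mem_erase hτ
        rw [hK, Finset.mem_filter] at hτK
        exact lexlt_mul c hdec (fun w => hτK.2 w) (Finset.ne_of_mem_erase hτ)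
  have keyall : ∀ y : MonoidAlgebra R (Equiv.Perm (Fin n)),
      (Submodule.Quotient.mk y : MonoidAlgebra R (Equiv.Perm (Fin n)) ⧸ J) ∈
        Submodule.span R (Set.range v) := by
    intro y
    induction y using MonoidAlgebra.induction_on with
    | of g =>
      exact key g
    | add f g hf hg =>
      rw [show (Submodule.Quotient.mk (f + g) : MonoidAlgebra R (Equiv.Perm (Fin n)) ⧸ J) =
        Submodule.Quotient.mk f + Submodule.Quotient.mk g from rfl]
      exact Submodule.add_mem _ hf hg
    | smul a f hf =>
      rw [Submodule.Quotient.mk_smul]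
      exact Submodule.smul_mem _ a hf
  intro z _
  obtain ⟨y, rfl⟩ := Submodule.Quotient.mk_surjective J z
  exact keyall y

end DotyProof

theorem doty_basis_of_quotient (R : Type) [CommRing R] (n r : ℕ) (hr : 0 < r) (hnr : r < n) :
    ∃ b : Module.Basis {σ : Equiv.Perm (Fin n) //
        ∃ f : Fin (n - r) → Fin n, StrictMono f ∧ StrictMono (fun k => σ (f k))} R
        (MonoidAlgebra R (Equiv.Perm (Fin n)) ⧸
          LinearMap.ker (dotyRep R n r).asAlgebraHom.toLinearMap),
      ∀ σ, b σ =
        Submodule.Quotient.mk (MonoidAlgebra.single (σ : Equiv.Perm (Fin n)) (1 : R)) := by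
  classical
  exact ⟨Module.Basis.mk (DotyProof.doty_indep R n r hr hnr) (DotyProof.doty_span R n r hr hnr),
    fun σ => Module.Basis.mk_apply _ _ _⟩
end

section
/- For r ≤ n, the map ψ: FSym(r) → the (ω,ω)-weight space of A(n,r), defined by ψ(σ) = c_{u, uσ} where u = (1,2,...,r) ∈ I(n,r), is an isomorphism of FSym(r)-bimodules. -/
open MonoidAlgebra Equiv

/-- The monomial `∏_k X_{(f k, k)}` (indices included into `Fin n`): these monomials are
exactly the bideterminant-free normal forms of the `c_{u,uσ}`, with `c_{u,uσ}` corresponding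
to `f = σ⁻¹`. -/
noncomputable def omegaMon (F : Type) [Field F] (n r : ℕ) (h : r ≤ n)
    (f : Equiv.Perm (Fin r)) : MvPolynomial (Fin n × Fin n) F :=
  ∏ k : Fin r, MvPolynomial.X (Fin.castLE h (f k), Fin.castLE h k)

/-- The `(ω,ω)`-weight space of `A(n,r)`: the span of the `c_{u,uσ}`. -/
noncomputable def omegaWt (F : Type) [Field F] (n r : ℕ) (h : r ≤ n) :
    Submodule F (MvPolynomial (Fin n × Fin n) F) :=
  Submodule.span F (Set.range (omegaMon F n r h))

/-- The equivalence between `Fin r` and the initial segment of `Fin n`. -/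
def finEquivLT {n r : ℕ} (h : r ≤ n) : Fin r ≃ {x : Fin n // (x : ℕ) < r} where
  toFun k := ⟨Fin.castLE h k, k.2⟩
  invFun x := ⟨(x.1 : ℕ), x.2⟩
  left_inv k := rfl
  right_inv x := rfl

/-- Extend a permutation of `{1,…,r}` to a permutation of `{1,…,n}` fixing the rest. -/
def extPerm {n r : ℕ} (h : r ≤ n) (τ : Equiv.Perm (Fin r)) : Equiv.Perm (Fin n) :=
  τ.extendDomain (finEquivLT h)

open MvPolynomial in
lemma prod_X_eq_monomial {σ R ι : Type*} [CommSemiring R] (s : Finset ι) (g : ι → σ) :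
    ∏ i ∈ s, (X (g i) : MvPolynomial σ R)
      = monomial (∑ i ∈ s, Finsupp.single (g i) 1) 1 := by
  classical
  induction s using Finset.induction with
  | empty => simp
  | insert _ _ hx ih =>
      rw [Finset.prod_insert hx, Finset.sum_insert hx, ih, X, monomial_mul, mul_one]

noncomputable def dmap (n r : ℕ) (h : r ≤ n) (f : Equiv.Perm (Fin r)) :
    (Fin n × Fin n) →₀ ℕ :=
  ∑ k : Fin r, Finsupp.single (Fin.castLE h (f k), Fin.castLE h k) 1

lemma omegaMon_eq (F : Type) [Field F] (n r : ℕ) (h : r ≤ n) (f : Equiv.Perm (Fin r)) :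
    omegaMon F n r h f = MvPolynomial.monomial (dmap n r h f) 1 :=
  prod_X_eq_monomial _ _

lemma dmap_apply (n r : ℕ) (h : r ≤ n) (f : Equiv.Perm (Fin r)) (k : Fin r) :
    dmap n r h f (Fin.castLE h (f k), Fin.castLE h k) = 1 := by
  rw [dmap, Finsupp.finset_sum_apply]
  rw [Finset.sum_eq_single k]
  · simp
  · intro b _ hb
    rw [Finsupp.single_apply_eq_zero]
    intro he
    exact absurd (Fin.castLE_injective h (congrArg Prod.snd he)).symm hb
  · simp

lemma dmap_injective (n r : ℕ) (h : r ≤ n) : Function.Injective (dmap n r h) := by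
  intro f g hfg
  ext k
  have h1 : dmap n r h g (Fin.castLE h (f k), Fin.castLE h k) = 1 := by
    rw [← hfg]; exact dmap_apply n r h f k
  rw [dmap, Finsupp.finset_sum_apply] at h1
  have : ∃ b ∈ Finset.univ, (Finsupp.single ((Fin.castLE h (g b), Fin.castLE h b) : Fin n × Fin n) 1) (Fin.castLE h (f k), Fin.castLE h k) ≠ 0 := by
    by_contra hc
    push_neg at hc
    rw [Finset.sum_eq_zero (fun b hb => hc b hb)] at h1
    exact one_ne_zero h1.symm
  obtain ⟨b, -, hb⟩ := this
  rw [Finsupp.single_apply_ne_zero] at hb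
  obtain ⟨he, -⟩ := hb
  have h2 := Fin.castLE_injective h (congrArg Prod.snd he)
  have h1' := Fin.castLE_injective h (congrArg Prod.fst he)
  rw [← h2] at h1'
  exact congrArg Fin.val h1'

lemma omegaMon_li (F : Type) [Field F] (n r : ℕ) (h : r ≤ n) :
    LinearIndependent F (omegaMon F n r h) := by
  have := ((MvPolynomial.basisMonomials (Fin n × Fin n) F).linearIndependent).comp
    (dmap n r h) (dmap_injective n r h)
  convert this using 1
  funext f
  rw [omegaMon_eq]
  simp [MvPolynomial.coe_basisMonomials, Function.comp]
  all_goals rfl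

lemma extPerm_castLE {n r : ℕ} (h : r ≤ n) (τ : Equiv.Perm (Fin r)) (k : Fin r) :
    extPerm h τ (Fin.castLE h k) = Fin.castLE h (τ k) :=
  Equiv.Perm.extendDomain_apply_image τ (finEquivLT h) k

lemma rename_left (F : Type) [Field F] (n r : ℕ) (h : r ≤ n) (τ σ : Equiv.Perm (Fin r)) :
    MvPolynomial.rename (fun p : Fin n × Fin n => (p.1, extPerm h τ p.2))
        (omegaMon F n r h σ⁻¹) = omegaMon F n r h (τ * σ)⁻¹ := by
  unfold omegaMon
  rw [map_prod]
  rw [← Equiv.prod_comp τ (fun k => MvPolynomial.X (R := F)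
      (Fin.castLE h ((τ * σ)⁻¹ k), Fin.castLE h k))]
  refine Finset.prod_congr rfl fun k _ => ?_
  simp [extPerm_castLE, mul_inv_rev, Equiv.Perm.mul_apply]

lemma rename_right (F : Type) [Field F] (n r : ℕ) (h : r ≤ n) (τ σ : Equiv.Perm (Fin r)) :
    MvPolynomial.rename (fun p : Fin n × Fin n => ((extPerm h τ)⁻¹ p.1, p.2))
        (omegaMon F n r h σ⁻¹) = omegaMon F n r h (σ * τ)⁻¹ := by
  unfold omegaMon
  rw [map_prod]
  refine Finset.prod_congr rfl fun k _ => ?_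
  have : (extPerm h τ)⁻¹ = extPerm h τ⁻¹ := by
    simp [extPerm, Equiv.Perm.extendDomain_inv]
  simp [this, extPerm_castLE, mul_inv_rev, Equiv.Perm.mul_apply]


lemma omegaMonInv_li (F : Type) [Field F] (n r : ℕ) (h : r ≤ n) :
    LinearIndependent F (fun σ : Equiv.Perm (Fin r) => omegaMon F n r h σ⁻¹) :=
  (omegaMon_li F n r h).comp (fun σ => σ⁻¹) (fun a b hab => by
    simpa using congrArg (·⁻¹) hab)

lemma span_omegaMonInv (F : Type) [Field F] (n r : ℕ) (h : r ≤ n) :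
    Submodule.span F (Set.range (fun σ : Equiv.Perm (Fin r) => omegaMon F n r h σ⁻¹))
      = omegaWt F n r h := by
  have hrange : Set.range (fun σ : Equiv.Perm (Fin r) => omegaMon F n r h σ⁻¹)
      = Set.range (omegaMon F n r h) := by
    ext p
    constructor
    · rintro ⟨σ, rfl⟩; exact ⟨σ⁻¹, rfl⟩
    · rintro ⟨σ, rfl⟩; exact ⟨σ⁻¹, by simp⟩
  rw [hrange]; rfl

noncomputable def psiE (F : Type) [Field F] (n r : ℕ) (h : r ≤ n) :
    MonoidAlgebra F (Equiv.Perm (Fin r)) ≃ₗ[F] omegaWt F n r h :=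
  (MonoidAlgebra.coeffLinearEquiv F).trans ((Module.Basis.span (omegaMonInv_li F n r h)).repr.symm.trans
    (LinearEquiv.ofEq _ _ (span_omegaMonInv F n r h)))

lemma psiE_single (F : Type) [Field F] (n r : ℕ) (h : r ≤ n) (σ : Equiv.Perm (Fin r)) :
    (psiE F n r h (MonoidAlgebra.single σ (1 : F)) : MvPolynomial (Fin n × Fin n) F) =
      omegaMon F n r h σ⁻¹ := by
  rw [psiE, LinearEquiv.trans_apply, LinearEquiv.trans_apply,
    MonoidAlgebra.coeffLinearEquiv_apply, MonoidAlgebra.coeff_single]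
  erw [Module.Basis.repr_symm_single_one]
  rw [LinearEquiv.coe_ofEq_apply, Module.Basis.span_apply]

theorem weight_space_bimodule_iso (F : Type) [Field F] (n r : ℕ) (h : r ≤ n) :
    ∃ ψ : MonoidAlgebra F (Equiv.Perm (Fin r)) ≃ₗ[F] omegaWt F n r h,
      (∀ σ : Equiv.Perm (Fin r),
        (ψ (MonoidAlgebra.single σ (1 : F)) : MvPolynomial (Fin n × Fin n) F) =
          omegaMon F n r h σ⁻¹) ∧
      (∀ (τ : Equiv.Perm (Fin r)) (x : MonoidAlgebra F (Equiv.Perm (Fin r))),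
        (ψ (MonoidAlgebra.single τ (1 : F) * x) : MvPolynomial (Fin n × Fin n) F) =
          MvPolynomial.rename (fun p => (p.1, extPerm h τ p.2))
            (ψ x : MvPolynomial (Fin n × Fin n) F)) ∧
      (∀ (τ : Equiv.Perm (Fin r)) (x : MonoidAlgebra F (Equiv.Perm (Fin r))),
        (ψ (x * MonoidAlgebra.single τ (1 : F)) : MvPolynomial (Fin n × Fin n) F) =
          MvPolynomial.rename (fun p => ((extPerm h τ)⁻¹ p.1, p.2))
            (ψ x : MvPolynomial (Fin n × Fin n) F)) := by
  classical
  refine ⟨psiE F n r h, psiE_single F n r h, ?_, ?_⟩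
  · intro τ x
    induction x using MonoidAlgebra.induction_linear with
    | zero => simp
    | add a b ha hb =>
        simp only [mul_add, map_add, Submodule.coe_add, ha, hb]
    | single σ c =>
        have hc : (MonoidAlgebra.single σ c : MonoidAlgebra F (Equiv.Perm (Fin r)))
            = c • MonoidAlgebra.single σ (1 : F) := by
          rw [MonoidAlgebra.smul_single']; rw [mul_one]
        rw [hc, mul_smul_comm, map_smul, map_smul, Submodule.coe_smul,
          Submodule.coe_smul, map_smul, psiE_single, MonoidAlgebra.single_mul_single,
          one_mul, psiE_single, rename_left]
  · intro τ x
    induction x using MonoidAlgebra.induction_linear with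
    | zero => simp
    | add a b ha hb =>
        simp only [add_mul, map_add, Submodule.coe_add, ha, hb]
    | single σ c =>
        have hc : (MonoidAlgebra.single σ c : MonoidAlgebra F (Equiv.Perm (Fin r)))
            = c • MonoidAlgebra.single σ (1 : F) := by
          rw [MonoidAlgebra.smul_single']; rw [mul_one]
        rw [hc, smul_mul_assoc, map_smul, map_smul, Submodule.coe_smul,
          Submodule.coe_smul, map_smul, psiE_single, MonoidAlgebra.single_mul_single,
          one_mul, psiE_single, rename_right]
end
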